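/- arXiv:1711.02576 — 7 statements merged into one kernel-verified Lean document; each statement's English description precedes it below -/
import Mathlib

section
/- Every unit sparse companion matrix of p in Hessenberg form has characteristic polynomial equal to p. That is, if C is an n×n complex matrix for which there exist an integer m with 0 ≤ m ≤ n−1 and positions (r_k, c_k) for k = 0, …, n−1 satisfying r_k − c_k = k, m+1 ≤ r_k ≤ n and 1 ≤ c_k ≤ m+1, such that C_{i,i+1} = 1 for 1 ≤ i ≤ n−1, C_{r_k,c_k} = −a_{n−1−k} for 0 ≤ k ≤ n−1, and all other entries of C are 0, then the characteristic polynomial of C is p(x). -/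
noncomputable section

/-- Maximum absolute row sum (the `∞`-norm). -/
def infNorm {n : ℕ} (A : Matrix (Fin n) (Fin n) ℂ) : ℝ :=
  ⨆ i, ∑ j, ‖A i j‖

/-- Maximum absolute column sum (the `1`-norm). -/
def oneNorm {n : ℕ} (A : Matrix (Fin n) (Fin n) ℂ) : ℝ :=
  ⨆ j, ∑ i, ‖A i j‖

/-- `N(A) = min {‖A‖_∞, ‖A‖_1}`. -/
def NN {n : ℕ} (A : Matrix (Fin n) (Fin n) ℂ) : ℝ :=
  min (infNorm A) (oneNorm A)

/-- The monic polynomial `p(x) = x^n + a_{n-1}x^{n-1} + ⋯ + a_1 x + a_0`. -/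
def pPoly (n : ℕ) (a : ℕ → ℂ) : Polynomial ℂ :=
  Polynomial.X ^ n + ∑ k ∈ Finset.range n, Polynomial.C (a k) * Polynomial.X ^ k

/-- Coefficients of the monic reversal polynomial `p♯`:
`asharp n a k` is the coefficient of `x^k` in `p♯`, namely `1/a_0` for `k = 0`
and `a_{n-k}/a_0` for `1 ≤ k ≤ n-1`. -/
def asharp (n : ℕ) (a : ℕ → ℂ) : ℕ → ℂ :=
  fun k => if k = 0 then 1 / a 0 else a (n - k) / a 0

/-- A unit sparse companion matrix of `p` in Hessenberg form, with explicit data: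
`m` (0-based; `m + 1 ≤ n`), and 0-based positions `(r k, c k)` (for `k = 0, …, n-1`)
satisfying `r k - c k = k`, `m ≤ r k ≤ n-1`, `0 ≤ c k ≤ m`; the superdiagonal
entries are `1`, the entry at `(r k, c k)` is `-a_{n-1-k}`, and all other entries
are `0`.  (This is the 0-based translation of the 1-based description.) -/
def IsUnitSparseData (n m : ℕ) (a : ℕ → ℂ) (C : Matrix (Fin n) (Fin n) ℂ)
    (r c : Fin n → Fin n) : Prop :=
  m + 1 ≤ n ∧
  (∀ k : Fin n, (r k : ℕ) = (c k : ℕ) + (k : ℕ)) ∧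
  (∀ k : Fin n, m ≤ (r k : ℕ)) ∧
  (∀ k : Fin n, (c k : ℕ) ≤ m) ∧
  (∀ k : Fin n, C (r k) (c k) = -a (n - 1 - (k : ℕ))) ∧
  (∀ i j : Fin n, (j : ℕ) = (i : ℕ) + 1 → C i j = 1) ∧
  (∀ i j : Fin n, (j : ℕ) ≠ (i : ℕ) + 1 →
    (∀ k : Fin n, ¬(r k = i ∧ c k = j)) → C i j = 0)

/-- A unit sparse companion matrix of `p` in Hessenberg form. -/
def IsUnitSparse (n : ℕ) (a : ℕ → ℂ) (C : Matrix (Fin n) (Fin n) ℂ) : Prop :=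
  ∃ (m : ℕ) (r c : Fin n → Fin n), IsUnitSparseData n m a C r c

/-- A Fiedler companion matrix of `p` in Hessenberg form (with explicit position
data): a unit sparse companion matrix such that for `1 ≤ k ≤ n-1`, if `-a_{k-1}`
occupies position `(i,j)` then `-a_k` occupies position `(i-1,j)` or `(i,j+1)`.
Here the coefficient `-a_{n-1-k}` sits at position index `k`, so the coefficient
`-a_{k-1}` has index `k' = n-k` and `-a_k` has index `n-1-k = k' - 1`. -/
def IsFiedlerData (n m : ℕ) (a : ℕ → ℂ) (C : Matrix (Fin n) (Fin n) ℂ)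
    (r c : Fin n → Fin n) : Prop :=
  IsUnitSparseData n m a C r c ∧
  ∀ k k' : Fin n, (k' : ℕ) = (k : ℕ) + 1 →
    ((r k : ℕ) + 1 = (r k' : ℕ) ∧ c k = c k') ∨
    (r k = r k' ∧ (c k : ℕ) = (c k' : ℕ) + 1)

/-- The Frobenius companion matrix of the monic polynomial with coefficients `a`
(0-based: superdiagonal `1`'s and last row `-a_0, -a_1, …, -a_{n-1}`). -/
def Frob (n : ℕ) (a : ℕ → ℂ) : Matrix (Fin n) (Fin n) ℂ :=
  Matrix.of fun i j =>
    if (j : ℕ) = (i : ℕ) + 1 then 1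
    else if (i : ℕ) = n - 1 then -a (j : ℕ)
    else 0

/-- The Fiedler companion matrix `L_b` (0-based translation): superdiagonal `1`'s,
`(L_b)_{i,b} = -a_{n+b-1-i}` for `b ≤ i ≤ n-2`, and `(L_b)_{n-1,j} = -a_j` for
`0 ≤ j ≤ b`; all other entries `0`. -/
def Lmat (n b : ℕ) (a : ℕ → ℂ) : Matrix (Fin n) (Fin n) ℂ :=
  Matrix.of fun i j =>
    if (j : ℕ) = (i : ℕ) + 1 then 1
    else if (i : ℕ) = n - 1 ∧ (j : ℕ) ≤ b then -a (j : ℕ)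
    else if (j : ℕ) = b ∧ b ≤ (i : ℕ) ∧ (i : ℕ) + 2 ≤ n then -a (n + b - 1 - (i : ℕ))
    else 0

/-- The matrix `W` (0-based translation): `W_{0,0} = -a_{n-1}`, `W_{0,n-1} = -a_0`,
`W_{i,i-1} = 1` for `1 ≤ i ≤ n-1`, `W_{i,0} = a_{i-1}/a_0` for `2 ≤ i ≤ n-1`;
all other entries `0`. -/
def Wmat (n : ℕ) (a : ℕ → ℂ) : Matrix (Fin n) (Fin n) ℂ :=
  Matrix.of fun i j =>
    if (i : ℕ) = 0 ∧ (j : ℕ) = 0 then -a (n - 1)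
    else if (i : ℕ) = 0 ∧ (j : ℕ) = n - 1 then -a 0
    else if (i : ℕ) = (j : ℕ) + 1 then 1
    else if 2 ≤ (i : ℕ) ∧ (j : ℕ) = 0 then a ((i : ℕ) - 1) / a 0
    else 0

/-- The matrix `X_b` (0-based translation): `(X_b)_{0,j} = -a_{n-1-j}` for
`0 ≤ j ≤ n-2-b`, `(X_b)_{0,n-1} = -a_0`, `(X_b)_{i,i-1} = 1` for `1 ≤ i ≤ n-2`,
`(X_b)_{n-1,n-2} = 1`, `(X_b)_{n-1,j} = a_{n-2-j}/a_0` for `n-2-b ≤ j ≤ n-3`;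
all other entries `0`. -/
def Xmat (n b : ℕ) (a : ℕ → ℂ) : Matrix (Fin n) (Fin n) ℂ :=
  Matrix.of fun i j =>
    if (i : ℕ) = 0 ∧ (j : ℕ) + b ≤ n - 2 then -a (n - 1 - (j : ℕ))
    else if (i : ℕ) = 0 ∧ (j : ℕ) = n - 1 then -a 0
    else if (i : ℕ) = (j : ℕ) + 1 ∧ (i : ℕ) + 2 ≤ n then 1
    else if (i : ℕ) = n - 1 ∧ (j : ℕ) = n - 2 then 1
    else if (i : ℕ) = n - 1 ∧ n - 2 ≤ (j : ℕ) + b ∧ (j : ℕ) + 3 ≤ n then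
      a (n - 2 - (j : ℕ)) / a 0
    else 0

/-- A matrix `E` of type `E_c(q)` for the monic polynomial with coefficients `b`
(0-based translation of the 1-based description): superdiagonal `1`'s,
`E_{n-1,0} = -b_0`, and positions `(r k, col k)` for `k = 0, …, n-2` with
`r k = col k + k`, `c ≤ r k`, `1 ≤ col k ≤ c`, holding `-b_{n-1-k}`; all other
entries `0`. -/
def IsTypeE (n c : ℕ) (b : ℕ → ℂ) (E : Matrix (Fin n) (Fin n) ℂ) : Prop :=
  ∃ r col : ℕ → Fin n,
    (∀ k : ℕ, k ≤ n - 2 → (r k : ℕ) = (col k : ℕ) + k) ∧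
    (∀ k : ℕ, k ≤ n - 2 → c ≤ (r k : ℕ)) ∧
    (∀ k : ℕ, k ≤ n - 2 → 1 ≤ (col k : ℕ) ∧ (col k : ℕ) ≤ c) ∧
    (∀ k : ℕ, k ≤ n - 2 → E (r k) (col k) = -b (n - 1 - k)) ∧
    (∀ i j : Fin n, (j : ℕ) = (i : ℕ) + 1 → E i j = 1) ∧
    (∀ i j : Fin n, (i : ℕ) = n - 1 → (j : ℕ) = 0 → E i j = -b 0) ∧
    (∀ i j : Fin n, (j : ℕ) ≠ (i : ℕ) + 1 → ¬((i : ℕ) = n - 1 ∧ (j : ℕ) = 0) →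
      (∀ k : ℕ, k ≤ n - 2 → ¬(r k = i ∧ col k = j)) → E i j = 0)

/-- `A` is of type `E_c(p♯)⁻¹`: `A = E⁻¹` for some `E` of type `E_c(p♯)`. -/
def IsTypeEInv (n c : ℕ) (a : ℕ → ℂ) (A : Matrix (Fin n) (Fin n) ℂ) : Prop :=
  ∃ E : Matrix (Fin n) (Fin n) ℂ, IsTypeE n c (asharp n a) E ∧ A = E⁻¹


namespace USC

open Equiv Finset Polynomial


lemma neg_add_val {n : ℕ} (c x : Fin (n+1)) :
    ((-c + x : Fin (n+1)) : ℕ) = if (x:ℕ) < c then (x:ℕ) + (n+1) - c else (x:ℕ) - c := by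
  have hx := x.isLt; have hc := c.isLt
  rw [neg_add_eq_sub, Fin.sub_def]
  simp only [Fin.val_mk]
  rcases lt_or_ge (x:ℕ) (c:ℕ) with h | h
  · rw [if_pos h, Nat.mod_eq_of_lt (by omega)]; omega
  · rw [if_neg (by omega), Nat.mod_eq_sub_mod (by omega), Nat.mod_eq_of_lt (by omega)]; omega

lemma fin_sub_val {n : ℕ} (x b : Fin (n+1)) (h : (b:ℕ) ≤ x) :
    ((x - b : Fin (n+1)) : ℕ) = (x:ℕ) - b := by
  rw [sub_eq_neg_add, neg_add_val, if_neg (by omega)]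

lemma add_val {n : ℕ} (c y : Fin (n+1)) :
    ((c + y : Fin (n+1)) : ℕ) =
      if (c:ℕ) + y < n+1 then (c:ℕ) + y else (c:ℕ) + y - (n+1) := by
  have hy := y.isLt; have hc := c.isLt
  rw [Fin.add_def]
  simp only [Fin.val_mk]
  rcases lt_or_ge ((c:ℕ) + y) (n+1) with h | h
  · rw [if_pos h, Nat.mod_eq_of_lt h]
  · rw [if_neg (by omega), Nat.mod_eq_sub_mod (by omega), Nat.mod_eq_of_lt (by omega)]

/-- the cycle sending `x ↦ x+1` for `c ≤ x < c+k`, `c+k ↦ c`, fixing the rest -/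
def cyc {n : ℕ} (c k : Fin (n+1)) : Equiv.Perm (Fin (n+1)) :=
  ((Equiv.addLeft c).symm.trans (Fin.cycleRange k)).trans (Equiv.addLeft c)

lemma cyc_val {n : ℕ} (c k x : Fin (n+1)) (h : (c:ℕ) + (k:ℕ) < n+1) :
    ((cyc c k x : Fin (n+1)) : ℕ) =
      if (x:ℕ) < (c:ℕ) then (x:ℕ)
      else if (x:ℕ) < (c:ℕ) + (k:ℕ) then (x:ℕ) + 1
      else if (x:ℕ) = (c:ℕ) + (k:ℕ) then (c:ℕ)
      else (x:ℕ) := by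
  have hx := x.isLt
  have hc := c.isLt
  have hk := k.isLt
  simp only [cyc, Equiv.trans_apply, Equiv.coe_addLeft, Equiv.addLeft_symm]
  have hyval := neg_add_val c x
  set y : Fin (n+1) := -c + x with hy
  rcases lt_or_ge (x:ℕ) (c:ℕ) with h1 | h1
  · rw [if_pos h1] at hyval
    have hky : (k : Fin (n+1)) < y := by
      rw [Fin.lt_def]; omega
    rw [Fin.cycleRange_of_gt hky, if_pos h1, add_val, hyval]
    split_ifs <;> omega
  · rw [if_neg (by omega)] at hyval
    rcases lt_or_ge (x:ℕ) ((c:ℕ) + (k:ℕ)) with h2 | h2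
    · have hyk : y < (k : Fin (n+1)) := by rw [Fin.lt_def]; omega
      rw [Fin.cycleRange_of_lt hyk]
      have h1n : ((1 : Fin (n+1)) : ℕ) = 1 := by
        rw [Fin.val_one']; exact Nat.mod_eq_of_lt (by omega)
      have hy1 : ((y + 1 : Fin (n+1)) : ℕ) = (y:ℕ) + 1 := by
        rw [add_val, h1n, hyval]; split_ifs <;> omega
      rw [if_neg (by omega), if_pos h2, add_val, hy1, hyval]
      split_ifs <;> omega
    · rcases eq_or_lt_of_le h2 with h3 | h3
      · have : y = k := by apply Fin.ext; omega
        rw [this, Fin.cycleRange_self, if_neg (by omega), if_neg (by omega), if_pos h3.symm]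
        simp
      · have hky : (k : Fin (n+1)) < y := by rw [Fin.lt_def]; omega
        rw [Fin.cycleRange_of_gt hky,
          if_neg (by omega), if_neg (by omega), if_neg (by omega), add_val, hyval]
        split_ifs <;> omega

lemma sign_cyc {n : ℕ} (c k : Fin (n+1)) :
    Equiv.Perm.sign (cyc c k) = (-1) ^ (k:ℕ) := by
  have : cyc c k = ((Equiv.addLeft c : Equiv.Perm (Fin (n+1))) *
      (Fin.cycleRange k * (Equiv.addLeft c : Equiv.Perm (Fin (n+1)))⁻¹)) := rfl
  rw [this, map_mul, map_mul, map_inv]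
  rw [mul_comm (Equiv.Perm.sign (Fin.cycleRange k)) _, ← mul_assoc]
  simp [Fin.sign_cycleRange]

lemma cross {n : ℕ} (σ : Equiv.Perm (Fin n)) (t : ℕ) :
    (Finset.univ.filter fun i : Fin n => (i:ℕ) ≤ t ∧ t < (σ i : ℕ)).card =
    (Finset.univ.filter fun i : Fin n => (σ i:ℕ) ≤ t ∧ t < (i : ℕ)).card := by
  classical
  have h1 : (Finset.univ.filter fun i : Fin n => (σ i:ℕ) ≤ t).card =
      (Finset.univ.filter fun i : Fin n => (i:ℕ) ≤ t).card := by
    apply Finset.card_bij (fun i _ => σ i)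
    · intro i hi
      simp only [Finset.mem_filter, Finset.mem_univ, true_and] at hi ⊢
      exact hi
    · intro i _ j _ h
      exact σ.injective h
    · intro j hj
      simp only [Finset.mem_filter, Finset.mem_univ, true_and] at hj ⊢
      exact ⟨σ.symm j, by simp [hj], by simp⟩
  have e1 := Finset.card_filter_add_card_filter_not
    (s := Finset.univ.filter fun i : Fin n => (i:ℕ) ≤ t) (p := fun i => (σ i:ℕ) ≤ t)
  have e2 := Finset.card_filter_add_card_filter_not
    (s := Finset.univ.filter fun i : Fin n => (σ i:ℕ) ≤ t) (p := fun i => (i:ℕ) ≤ t)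
  simp only [Finset.filter_filter] at e1 e2
  have c1 : ((Finset.univ.filter fun i : Fin n => (i:ℕ) ≤ t ∧ (σ i:ℕ) ≤ t)).card
      = ((Finset.univ.filter fun i : Fin n => (σ i:ℕ) ≤ t ∧ (i:ℕ) ≤ t)).card := by
    congr 1; apply Finset.filter_congr; intro i _; simp [and_comm]
  have g1 : (Finset.univ.filter fun i : Fin n => (i:ℕ) ≤ t ∧ t < (σ i : ℕ))
      = (Finset.univ.filter fun i : Fin n => (i:ℕ) ≤ t ∧ ¬ (σ i:ℕ) ≤ t) := by
    apply Finset.filter_congr; intro i _; simp [not_le]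
  have g2 : (Finset.univ.filter fun i : Fin n => (σ i:ℕ) ≤ t ∧ t < (i : ℕ))
      = (Finset.univ.filter fun i : Fin n => (σ i:ℕ) ≤ t ∧ ¬ (i:ℕ) ≤ t) := by
    apply Finset.filter_congr; intro i _; simp [not_le]
  rw [g1, g2]
  omega

lemma classify {n m : ℕ} (σ : Equiv.Perm (Fin (n+1)))
    (H : ∀ i : Fin (n+1), (σ i : ℕ) = i ∨ (σ i : ℕ) = (i:ℕ) + 1 ∨
          ((σ i:ℕ) < i ∧ (σ i:ℕ) ≤ m ∧ m ≤ (i:ℕ))) :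
    σ = 1 ∨ ∃ i0 : Fin (n+1), (σ i0 : ℕ) < (i0:ℕ) ∧ σ = cyc (σ i0) (i0 - σ i0) := by
  classical
  by_cases hJ : ∀ i : Fin (n+1), (i:ℕ) ≤ (σ i : ℕ)
  · left
    have hsum : ∑ i : Fin (n+1), ((fun j : Fin (n+1) => (j:ℕ)) (σ i)) = ∑ i : Fin (n+1), (i:ℕ) :=
      Equiv.sum_comp σ (fun j : Fin (n+1) => (j:ℕ))
    have heq := (Finset.sum_eq_sum_iff_of_le (fun i _ => hJ i)).mp hsum.symm
    ext i
    exact (heq i (Finset.mem_univ i)).symm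
  · push_neg at hJ
    obtain ⟨i0, hi0⟩ := hJ
    right
    have hup : ∀ (t : ℕ) (i : Fin (n+1)), (i:ℕ) ≤ t → t < (σ i:ℕ) →
        (σ i:ℕ) = (i:ℕ)+1 ∧ (i:ℕ) = t := by
      intro t i h1 h2
      rcases H i with h|h|h <;> omega
    have downmem : ∀ i : Fin (n+1), (σ i:ℕ) < i → ((σ i:ℕ) ≤ m ∧ m ≤ (i:ℕ)) := by
      intro i h
      rcases H i with h'|h'|h' <;> omega
    have exup : ∀ (t : ℕ) (j : Fin (n+1)), (σ j:ℕ) ≤ t → t < (j:ℕ) →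
        ∃ i : Fin (n+1), (i:ℕ) = t ∧ (σ i:ℕ) = t+1 := by
      intro t j h1 h2
      have hc := cross σ t
      have hpos : 0 < (Finset.univ.filter fun i : Fin (n+1) => (σ i:ℕ) ≤ t ∧ t < (i : ℕ)).card :=
        Finset.card_pos.mpr ⟨j, by simp [h1, h2]⟩
      rw [← hc] at hpos
      obtain ⟨i, hi⟩ := Finset.card_pos.mp hpos
      simp only [Finset.mem_filter, Finset.mem_univ, true_and] at hi
      obtain ⟨e1, e2⟩ := hup t i hi.1 hi.2
      exact ⟨i, e2, by omega⟩
    have exdown : ∀ (t : ℕ) (i : Fin (n+1)), (i:ℕ) ≤ t → t < (σ i:ℕ) →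
        ∃ j : Fin (n+1), (σ j:ℕ) ≤ t ∧ t < (j:ℕ) := by
      intro t i h1 h2
      have hc := cross σ t
      have hpos : 0 < (Finset.univ.filter fun i : Fin (n+1) => (i:ℕ) ≤ t ∧ t < (σ i : ℕ)).card :=
        Finset.card_pos.mpr ⟨i, by simp [h1, h2]⟩
      rw [hc] at hpos
      obtain ⟨j, hj⟩ := Finset.card_pos.mp hpos
      simp only [Finset.mem_filter, Finset.mem_univ, true_and] at hj
      exact ⟨j, hj⟩
    have atmost : ∀ (t : ℕ) (j1 j2 : Fin (n+1)), (σ j1:ℕ) ≤ t → t < (j1:ℕ) →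
        (σ j2:ℕ) ≤ t → t < (j2:ℕ) → j1 = j2 := by
      intro t j1 j2 a1 a2 a3 a4
      by_contra hne
      have hc := cross σ t
      have hcard1 : (Finset.univ.filter fun i : Fin (n+1) => (i:ℕ) ≤ t ∧ t < (σ i : ℕ)).card ≤ 1 := by
        apply Finset.card_le_one.mpr
        intro x hx y hy
        simp only [Finset.mem_filter, Finset.mem_univ, true_and] at hx hy
        have hx' := hup t x hx.1 hx.2
        have hy' := hup t y hy.1 hy.2
        apply Fin.ext; omega
      have h2 : 1 < (Finset.univ.filter fun i : Fin (n+1) => (σ i:ℕ) ≤ t ∧ t < (i : ℕ)).card :=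
        Finset.one_lt_card.mpr ⟨j1, by simp [a1, a2], j2, by simp [a3, a4], hne⟩
      omega
    have huniq : ∀ i : Fin (n+1), (σ i:ℕ) < i → i = i0 := by
      intro j1 hj1
      have d0 := downmem i0 hi0
      have d1 := downmem j1 hj1
      by_contra hne
      by_cases c1 : m < (j1:ℕ) <;> by_cases c2 : m < (i0:ℕ)
      · exact hne (atmost m j1 i0 (by omega) c1 (by omega) c2)
      · have hi0m : (i0:ℕ) = m := by omega
        by_cases c3 : (σ j1:ℕ) < m
        · exact hne (atmost (m-1) j1 i0 (by omega) (by omega) (by omega) (by omega))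
        · obtain ⟨u, hu1, hu2⟩ := exup m j1 (by omega) c1
          have : u = i0 := Fin.ext (by omega)
          rw [this] at hu2
          omega
      · have hj1m : (j1:ℕ) = m := by omega
        by_cases c3 : (σ i0:ℕ) < m
        · exact hne (atmost (m-1) j1 i0 (by omega) (by omega) (by omega) (by omega))
        · obtain ⟨u, hu1, hu2⟩ := exup m i0 (by omega) c2
          have : u = j1 := Fin.ext (by omega)
          rw [this] at hu2
          omega
      · exact hne (Fin.ext (by omega))
    refine ⟨i0, hi0, ?_⟩
    have hccv : ((i0 - σ i0 : Fin (n+1)) : ℕ) = (i0:ℕ) - (σ i0:ℕ) :=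
      fin_sub_val _ _ (by omega)
    have hbound : ((σ i0 : Fin (n+1)):ℕ) + ((i0 - σ i0 : Fin (n+1)) : ℕ) < n+1 := by
      rw [hccv]; have := i0.isLt; omega
    ext x
    rw [cyc_val _ _ _ hbound, hccv]
    rcases lt_or_ge (x:ℕ) ((σ i0:ℕ)) with b1 | b1
    · rw [if_pos b1]
      rcases H x with h|h|h
      · exact h
      · obtain ⟨j, hj1, hj2⟩ := exdown (x:ℕ) x (le_refl _) (by omega)
        have : j = i0 := huniq j (by omega)
        subst this
        omega
      · have := huniq x (by omega); subst this; omega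
    · rcases lt_or_ge (x:ℕ) ((σ i0:ℕ) + ((i0:ℕ) - (σ i0:ℕ))) with b2 | b2
      · rw [if_neg (by omega), if_pos b2]
        obtain ⟨u, hu1, hu2⟩ := exup (x:ℕ) i0 (by omega) (by omega)
        have : u = x := Fin.ext (by omega)
        subst this
        omega
      · rcases eq_or_lt_of_le b2 with b3 | b3
        · have : x = i0 := Fin.ext (by omega)
          subst this
          rw [if_neg (by omega), if_neg (by omega), if_pos (by omega)]
        · rw [if_neg (by omega), if_neg (by omega), if_neg (by omega)]
          rcases H x with h|h|h
          · exact h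
          · obtain ⟨j, hj1, hj2⟩ := exdown (x:ℕ) x (le_refl _) (by omega)
            have : j = i0 := huniq j (by omega)
            subst this
            omega
          · have := huniq x (by omega); subst this; omega

end USC

open Polynomial Matrix in
/-- every unit sparse companion matrix of `p` in Hessenberg form has
characteristic polynomial `p`. -/
theorem stmt0 (n : ℕ) (hn : 2 ≤ n) (a : ℕ → ℂ) (C : Matrix (Fin n) (Fin n) ℂ)
    (hC : IsUnitSparse n a C) :
    C.charpoly = pPoly n a := by
  classical
  obtain ⟨m, r, c, h1, h2, h3, h4, h5, h6, h7⟩ := hC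
  obtain ⟨N, rfl⟩ : ∃ N, n = N + 1 := ⟨n - 1, by omega⟩
  have hN : 1 ≤ N := by omega
  have hm : m ≤ N := by omega
  -- the distinguished diagonal position
  have hk0 : ((r 0 : ℕ) = m ∧ ((c 0 : Fin (N+1)) : ℕ) = m) := by
    have e2 := h2 0; have e3 := h3 0; have e4 := h4 0
    simp only [Fin.val_zero] at e2
    omega
  have hdiag : ∀ i : Fin (N+1), C i i = (if (i:ℕ) = m then -a N else 0) := by
    intro i
    by_cases him : (i:ℕ) = m
    · rw [if_pos him]
      have hr : r 0 = i := Fin.ext (by omega)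
      have hc : c 0 = i := Fin.ext (by omega)
      have := h5 0
      rw [hr, hc] at this
      simpa using this
    · rw [if_neg him]
      apply h7 i i (by omega)
      intro k ⟨hk1, hk2⟩
      have e2 := h2 k; have e3 := h3 k; have e4 := h4 k
      have hv1 : ((r k):ℕ) = (i:ℕ) := by rw [hk1]
      have hv2 : ((c k):ℕ) = (i:ℕ) := by rw [hk2]
      omega
  -- the candidate permutations
  set ι : Fin (N+1) → Equiv.Perm (Fin (N+1)) :=
    fun k => if k = 0 then 1 else USC.cyc (c k) k with hι
  have hcrv : ∀ k : Fin (N+1), (c k : ℕ) + (k : ℕ) < N + 1 := by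
    intro k; have := h2 k; have := (r k).isLt; omega
  have hcycval := fun (k : Fin (N+1)) (x : Fin (N+1)) => USC.cyc_val (c k) k x (hcrv k)
  have hvz : ∀ k : Fin (N+1), k ≠ 0 → 1 ≤ (k:ℕ) := by
    intro k hk
    have : (k:ℕ) ≠ 0 := fun h => hk (Fin.ext (by simpa using h))
    omega
  -- injectivity of ι
  have hinj : Function.Injective ι := by
    intro k k' heq
    simp only [hι] at heq
    by_cases hk : k = 0 <;> by_cases hk' : k' = 0
    · rw [hk, hk']
    · exfalso
      rw [if_pos hk, if_neg hk'] at heq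
      have := DFunLike.congr_fun heq (c k')
      have hv := hcycval k' (c k')
      rw [← this] at hv
      simp only [Equiv.Perm.one_apply] at hv
      have := hvz k' hk'
      rw [if_neg (by omega), if_pos (by omega)] at hv
      omega
    · exfalso
      rw [if_neg hk, if_pos hk'] at heq
      have := DFunLike.congr_fun heq (c k)
      have hv := hcycval k (c k)
      rw [this] at hv
      simp only [Equiv.Perm.one_apply] at hv
      have := hvz k hk
      rw [if_neg (by omega), if_pos (by omega)] at hv
      omega
    · rw [if_neg hk, if_neg hk'] at heq
      have hck : (c k : ℕ) = (c k' : ℕ) := by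
        rcases lt_trichotomy (c k : ℕ) (c k' : ℕ) with h | h | h
        · exfalso
          have e := DFunLike.congr_fun heq (c k)
          have v1 := hcycval k (c k)
          have v2 := hcycval k' (c k)
          rw [e] at v1
          rw [v2, if_pos h] at v1
          have := hvz k hk
          rw [if_neg (by omega), if_pos (by omega)] at v1
          omega
        · exact h
        · exfalso
          have e := DFunLike.congr_fun heq (c k')
          have v1 := hcycval k (c k')
          have v2 := hcycval k' (c k')
          rw [e] at v1
          rw [v2] at v1
          have := hvz k' hk'
          rw [if_neg (by omega), if_pos (by omega), if_pos h] at v1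
          omega
      have hkk : (k : ℕ) = (k' : ℕ) := by
        rcases lt_trichotomy (k : ℕ) (k' : ℕ) with h | h | h
        · exfalso
          have e := DFunLike.congr_fun heq (r k)
          have v1 := hcycval k (r k)
          have v2 := hcycval k' (r k)
          have e2 := h2 k
          rw [e] at v1
          rw [v2, if_neg (by omega), if_pos (by omega)] at v1
          rw [if_neg (by omega), if_neg (by omega), if_pos (by omega)] at v1
          omega
        · exact h
        · exfalso
          have e := DFunLike.congr_fun heq (r k')
          have v1 := hcycval k (r k')
          have v2 := hcycval k' (r k')
          have e2 := h2 k'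
          rw [e] at v1
          rw [v2, if_neg (by omega), if_neg (by omega), if_pos (by omega)] at v1
          rw [if_neg (by omega), if_pos (by omega)] at v1
          omega
      exact Fin.ext hkk
  -- determinant expansion over permutations
  rw [Matrix.charpoly, ← Matrix.det_transpose, Matrix.det_apply']
  -- entries trichotomy for contributing permutations
  have hentry : ∀ (σ : Equiv.Perm (Fin (N+1))) (i : Fin (N+1)),
      Matrix.charmatrix C i (σ i) ≠ 0 → σ i ≠ i → ((σ i : ℕ) ≠ (i:ℕ) + 1) →
      ∃ k : Fin (N+1), k ≠ 0 ∧ r k = i ∧ c k = σ i := by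
    intro σ i hne hd hsup
    have hcm : Matrix.charmatrix C i (σ i) = -Polynomial.C (C i (σ i)) :=
      Matrix.charmatrix_apply_ne _ _ _ (fun h => hd h.symm)
    have hC0 : C i (σ i) ≠ 0 := by
      intro h
      rw [hcm, h] at hne
      simp at hne
    have hex : ¬ (∀ k, ¬(r k = i ∧ c k = σ i)) := fun hall =>
      hC0 (h7 i (σ i) (fun h => hsup h) hall)
    push_neg at hex
    obtain ⟨k, hk1, hk2⟩ := hex
    refine ⟨k, ?_, hk1, hk2⟩
    intro hk0'
    apply hd
    have e2 := h2 k
    have hv1 : ((r k):ℕ) = (i:ℕ) := by rw [hk1]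
    have hv2 : ((c k):ℕ) = ((σ i):ℕ) := by rw [hk2]
    have : (k:ℕ) = 0 := by rw [hk0']; rfl
    exact Fin.ext (by omega)
  -- vanishing off the candidate set
  have vanish : ∀ σ ∈ (Finset.univ : Finset (Equiv.Perm (Fin (N+1)))),
      σ ∉ Finset.univ.image ι →
      ((Equiv.Perm.sign σ : ℤ) : Polynomial ℂ) * ∏ i, (Matrix.charmatrix C)ᵀ (σ i) i = 0 := by
    intro σ _ hσ
    by_contra hne0
    have hprod : (∏ i, (Matrix.charmatrix C)ᵀ (σ i) i) ≠ 0 := by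
      intro h
      rw [h] at hne0
      simp at hne0
    have hfac : ∀ i : Fin (N+1), Matrix.charmatrix C i (σ i) ≠ 0 := by
      intro i
      have := Finset.prod_ne_zero_iff.mp hprod i (Finset.mem_univ i)
      rwa [Matrix.transpose_apply] at this
    have H : ∀ i : Fin (N+1), (σ i : ℕ) = i ∨ (σ i : ℕ) = (i:ℕ) + 1 ∨
        ((σ i:ℕ) < i ∧ (σ i:ℕ) ≤ m ∧ m ≤ (i:ℕ)) := by
      intro i
      by_cases hd : σ i = i
      · left; rw [hd]
      · by_cases hsup : (σ i : ℕ) = (i:ℕ) + 1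
        · right; left; exact hsup
        · right; right
          obtain ⟨k, hk0', hk1, hk2⟩ := hentry σ i (hfac i) hd hsup
          have e2 := h2 k
          have e3 := h3 k
          have e4 := h4 k
          have hv1 : ((r k):ℕ) = (i:ℕ) := by rw [hk1]
          have hv2 : ((c k):ℕ) = ((σ i):ℕ) := by rw [hk2]
          have := hvz k hk0'
          omega
    rcases USC.classify (m := m) σ H with h | ⟨i0, hlt, hcyc⟩
    · exact hσ (Finset.mem_image.mpr ⟨0, Finset.mem_univ _, by simp [hι, h]⟩)
    · have hd : σ i0 ≠ i0 := fun h => by rw [h] at hlt; omega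
      obtain ⟨k, hk0', hk1, hk2⟩ := hentry σ i0 (hfac i0) hd (by omega)
      have e2 := h2 k
      have hv1 : ((r k):ℕ) = (i0:ℕ) := by rw [hk1]
      have hv2 : ((c k):ℕ) = ((σ i0):ℕ) := by rw [hk2]
      have hsub : i0 - σ i0 = k := by
        apply Fin.ext
        rw [USC.fin_sub_val _ _ (by omega)]
        omega
      apply hσ
      refine Finset.mem_image.mpr ⟨k, Finset.mem_univ _, ?_⟩
      simp only [hι, if_neg hk0']
      rw [hcyc, hsub, ← hk2]
  rw [← Finset.sum_subset (Finset.subset_univ (Finset.univ.image ι)) vanish]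
  rw [Finset.sum_image (fun k _ k' _ h => hinj h)]
  -- compute each term
  set mF : Fin (N+1) := ⟨m, by omega⟩ with hmF
  have hterm : ∀ k : Fin (N+1),
      ((Equiv.Perm.sign (ι k) : ℤ) : Polynomial ℂ) * ∏ i, (Matrix.charmatrix C)ᵀ (ι k i) i =
      (if k = 0 then (Polynomial.X ^ (N+1) : Polynomial ℂ) else 0) +
        Polynomial.C (a (N - (k:ℕ))) * Polynomial.X ^ (N - (k:ℕ)) := by
    intro k
    by_cases hk : k = 0
    · subst hk
      simp only [hι, if_pos rfl]
      have hdfac : ∀ i : Fin (N+1), (Matrix.charmatrix C)ᵀ ((1 : Equiv.Perm (Fin (N+1))) i) i =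
          if i = mF then Polynomial.X + Polynomial.C (a N) else Polynomial.X := by
        intro i
        rw [Equiv.Perm.one_apply, Matrix.transpose_apply, Matrix.charmatrix_apply_eq, hdiag i]
        by_cases hi : i = mF
        · rw [if_pos hi, if_pos (by rw [hi]), map_neg, sub_neg_eq_add]
        · rw [if_neg hi, if_neg (fun h => hi (Fin.ext h)), map_zero, sub_zero]
      rw [Finset.prod_congr rfl (fun i _ => hdfac i)]
      rw [← Finset.mul_prod_erase _ _ (Finset.mem_univ mF), if_pos rfl]
      rw [Finset.prod_congr rfl
        (fun i hi => if_neg (Finset.ne_of_mem_erase hi)), Finset.prod_const]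
      rw [Finset.card_erase_of_mem (Finset.mem_univ mF)]
      simp only [Finset.card_univ, Fintype.card_fin]
      have hc0 : ((0 : Fin (N+1)) : ℕ) = 0 := rfl
      simp only [Equiv.Perm.sign_one, if_pos rfl, hc0, Nat.sub_zero]
      push_cast
      ring
    · simp only [hι, if_neg hk]
      have hk1 := hvz k hk
      have e2 := h2 k
      have e3 := h3 k
      have e4 := h4 k
      have hrlt := (r k).isLt
      -- the fixed-point part
      rw [← Finset.prod_mul_prod_compl (Finset.Icc (c k) (r k))]
      have hcompl : ∀ i ∈ (Finset.Icc (c k) (r k))ᶜ,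
          (Matrix.charmatrix C)ᵀ ((USC.cyc (c k) k) i) i = Polynomial.X := by
        intro i hi
        rw [Finset.mem_compl, Finset.mem_Icc] at hi
        have hi' : (i:ℕ) < (c k : ℕ) ∨ ((r k):ℕ) < (i:ℕ) := by
          rcases not_and_or.mp hi with h | h
          · left; have := Fin.lt_def.mp (not_le.mp h); omega
          · right; have := Fin.lt_def.mp (not_le.mp h); omega
        have hfix : USC.cyc (c k) k i = i := by
          apply Fin.ext
          rw [hcycval k i]
          split_ifs <;> omega
        rw [hfix, Matrix.transpose_apply, Matrix.charmatrix_apply_eq, hdiag i,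
          if_neg (by omega), map_zero, sub_zero]
      rw [Finset.prod_congr rfl hcompl, Finset.prod_const, Finset.card_compl,
        Fin.card_Icc, Fintype.card_fin]
      -- the cycle part
      have hcr : c k ≤ r k := Fin.le_def.mpr (by omega)
      rw [← Finset.Ico_insert_right hcr, Finset.prod_insert (by simp [Finset.mem_Ico])]
      have hσr : USC.cyc (c k) k (r k) = c k := by
        apply Fin.ext
        rw [hcycval k (r k)]
        split_ifs <;> omega
      have hrc : r k ≠ c k := fun h => by
        have : ((r k):ℕ) = ((c k):ℕ) := by rw [h]
        omega
      rw [hσr, Matrix.transpose_apply, Matrix.charmatrix_apply_ne _ _ _ hrc, h5 k]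
      have hico : ∀ i ∈ Finset.Ico (c k) (r k),
          (Matrix.charmatrix C)ᵀ ((USC.cyc (c k) k) i) i = -1 := by
        intro i hi
        rw [Finset.mem_Ico] at hi
        have hiv : (c k : ℕ) ≤ (i:ℕ) ∧ (i:ℕ) < ((r k):ℕ) :=
          ⟨Fin.le_def.mp hi.1, Fin.lt_def.mp hi.2⟩
        have hval : ((USC.cyc (c k) k i : Fin (N+1)) : ℕ) = (i:ℕ) + 1 := by
          rw [hcycval k i]
          split_ifs <;> omega
        have hne : USC.cyc (c k) k i ≠ i := fun h => by
          rw [h] at hval; omega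
        rw [Matrix.transpose_apply, Matrix.charmatrix_apply_ne _ _ _ (fun h => hne h.symm),
          h6 i _ hval, _root_.map_one]
      rw [Finset.prod_congr rfl hico, Finset.prod_const, Fin.card_Ico]
      rw [USC.sign_cyc]
      have hidx : N + 1 - 1 - (k:ℕ) = N - (k:ℕ) := by omega
      have hcards : ((r k):ℕ) + 1 - ((c k):ℕ) = (k:ℕ) + 1 := by omega
      have hcardc : ((r k):ℕ) - ((c k):ℕ) = (k:ℕ) := by omega
      rw [hidx, hcards, hcardc, map_neg, neg_neg]
      have hexp : N + 1 - ((k:ℕ) + 1) = N - (k:ℕ) := by omega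
      rw [hexp]
      have hcast : ((((-1 : ℤˣ) ^ (k:ℕ) : ℤˣ) : ℤ) : Polynomial ℂ) = (-1 : Polynomial ℂ)^(k:ℕ) := by
        push_cast
        ring
      rw [hcast]
      have h11 : ((-1 : Polynomial ℂ)^(k:ℕ)) * ((-1 : Polynomial ℂ)^(k:ℕ)) = 1 := by
        rw [← pow_add]
        exact Even.neg_one_pow ⟨(k:ℕ), by ring⟩
      linear_combination (Polynomial.C (a (N-(k:ℕ))) * Polynomial.X^(N-(k:ℕ))) * h11

  rw [Finset.sum_congr rfl (fun k _ => hterm k)]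
  rw [Finset.sum_add_distrib]
  rw [Finset.sum_ite_eq' Finset.univ (0 : Fin (N+1))
    (fun _ => (Polynomial.X ^ (N+1) : ℂ[X]))]
  rw [Fin.sum_univ_eq_sum_range (fun j => Polynomial.C (a (N - j)) * Polynomial.X ^ (N - j))]
  have hrefl := Finset.sum_range_reflect
    (fun j => Polynomial.C (a j) * Polynomial.X ^ j) (N+1)
  simp only [Nat.add_sub_cancel] at hrefl
  rw [hrefl]
  simp [pPoly]


end
end

section
/- If λ ∈ ℂ is a root of p and C is a unit sparse companion matrix of p in Hessenberg form, then |λ| ≤ N(C). If moreover a_0 ≠ 0 and D is a unit sparse companion matrix of the monic reversal polynomial p♯ in Hessenberg form, then |λ| ≥ 1/N(D). -/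
noncomputable section

/-! ### Auxiliary lemmas -/

lemma pPoly_eval' (n : ℕ) (a : ℕ → ℂ) (x : ℂ) :
    (pPoly n a).eval x = x ^ n + ∑ k ∈ Finset.range n, a k * x ^ k := by
  simp [pPoly, Polynomial.eval_finset_sum]

lemma pPoly_eval_fin' (n : ℕ) (a : ℕ → ℂ) (x : ℂ) :
    (pPoly n a).eval x
      = x ^ n + ∑ k : Fin n, a (n - 1 - (k : ℕ)) * x ^ (n - 1 - (k : ℕ)) := by
  rw [pPoly_eval', Fin.sum_univ_eq_sum_range (fun k => a (n - 1 - k) * x ^ (n - 1 - k)) n,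
    Finset.sum_range_reflect (fun k => a k * x ^ k) n]

lemma eigen_le_infNorm' {n : ℕ} (hn : 0 < n) (A : Matrix (Fin n) (Fin n) ℂ) (lam : ℂ)
    (v : Fin n → ℂ) (hv : v ≠ 0) (h : ∀ i, ∑ j, A i j * v j = lam * v i) :
    ‖lam‖ ≤ infNorm A := by
  have hne : Nonempty (Fin n) := ⟨⟨0, hn⟩⟩
  obtain ⟨i, -, hi⟩ := Finset.exists_max_image Finset.univ (fun i => ‖v i‖)
    ⟨⟨0, hn⟩, Finset.mem_univ _⟩
  have hvi : 0 < ‖v i‖ := by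
    obtain ⟨j, hj⟩ := Function.ne_iff.mp hv
    exact lt_of_lt_of_le (norm_pos_iff.mpr hj) (hi j (Finset.mem_univ j))
  have key : ‖lam‖ * ‖v i‖
      ≤ (∑ j, ‖A i j‖) * ‖v i‖ := by
    calc ‖lam‖ * ‖v i‖ = ‖lam * v i‖ := (norm_mul _ _).symm
      _ = ‖∑ j, A i j * v j‖ := by rw [h i]
      _ ≤ ∑ j, ‖A i j * v j‖ := norm_sum_le _ _
      _ = ∑ j, ‖A i j‖ * ‖v j‖ := by simp [map_mul]
      _ ≤ ∑ j, ‖A i j‖ * ‖v i‖ := by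
          refine Finset.sum_le_sum fun j _ => ?_
          exact mul_le_mul_of_nonneg_left (hi j (Finset.mem_univ j)) (norm_nonneg _)
      _ = (∑ j, ‖A i j‖) * ‖v i‖ := (Finset.sum_mul _ _ _).symm
  have h1 : ‖lam‖ ≤ ∑ j, ‖A i j‖ := le_of_mul_le_mul_right key hvi
  have h2 : (∑ j, ‖A i j‖) ≤ infNorm A :=
    le_ciSup (f := fun i => ∑ j, ‖A i j‖) (Set.Finite.bddAbove (Set.finite_range _)) i
  exact h1.trans h2

lemma eigen_le_oneNorm' {n : ℕ} (hn : 0 < n) (A : Matrix (Fin n) (Fin n) ℂ) (lam : ℂ)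
    (w : Fin n → ℂ) (hw : w ≠ 0) (h : ∀ j, ∑ i, w i * A i j = lam * w j) :
    ‖lam‖ ≤ oneNorm A := by
  have hne : Nonempty (Fin n) := ⟨⟨0, hn⟩⟩
  obtain ⟨j, -, hj⟩ := Finset.exists_max_image Finset.univ (fun j => ‖w j‖)
    ⟨⟨0, hn⟩, Finset.mem_univ _⟩
  have hwj : 0 < ‖w j‖ := by
    obtain ⟨i, hi⟩ := Function.ne_iff.mp hw
    exact lt_of_lt_of_le (norm_pos_iff.mpr hi) (hj i (Finset.mem_univ i))
  have key : ‖lam‖ * ‖w j‖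
      ≤ (∑ i, ‖A i j‖) * ‖w j‖ := by
    calc ‖lam‖ * ‖w j‖ = ‖lam * w j‖ := (norm_mul _ _).symm
      _ = ‖∑ i, w i * A i j‖ := by rw [h j]
      _ ≤ ∑ i, ‖w i * A i j‖ := norm_sum_le _ _
      _ = ∑ i, ‖A i j‖ * ‖w i‖ := by simp [map_mul, mul_comm]
      _ ≤ ∑ i, ‖A i j‖ * ‖w j‖ := by
          refine Finset.sum_le_sum fun i _ => ?_
          exact mul_le_mul_of_nonneg_left (hj i (Finset.mem_univ i)) (norm_nonneg _)
      _ = (∑ i, ‖A i j‖) * ‖w j‖ := (Finset.sum_mul _ _ _).symm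
  have h1 : ‖lam‖ ≤ ∑ i, ‖A i j‖ := le_of_mul_le_mul_right key hwj
  have h2 : (∑ i, ‖A i j‖) ≤ oneNorm A :=
    le_ciSup (f := fun j => ∑ i, ‖A i j‖) (Set.Finite.bddAbove (Set.finite_range _)) j
  exact h1.trans h2

lemma sum_ite_coe_eq {n : ℕ} (f : Fin n → ℂ) (t : ℕ) :
    (∑ j : Fin n, if (j : ℕ) = t then f j else 0)
      = if h : t < n then f ⟨t, h⟩ else 0 := by
  split
  · next h =>
    rw [Finset.sum_eq_single (⟨t, h⟩ : Fin n)]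
    · simp
    · intro j _ hj
      rw [if_neg]
      exact fun hc => hj (Fin.ext hc)
    · intro hc; exact absurd (Finset.mem_univ _) hc
  · next h =>
    refine Finset.sum_eq_zero fun j _ => ?_
    rw [if_neg]
    have := j.isLt
    omega

lemma abs_root_le_NN {n : ℕ} (hn : 2 ≤ n) (a : ℕ → ℂ) (lam : ℂ)
    (hroot : (pPoly n a).eval lam = 0)
    (C : Matrix (Fin n) (Fin n) ℂ) (hC : IsUnitSparse n a C) :
    ‖lam‖ ≤ NN C := by
  obtain ⟨m, r, c, hmn, hrc, hmr, hcm, hval, hsup, hzero⟩ := hC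
  set T : Fin n → ℂ := fun k => a (n - 1 - (k : ℕ)) with hT
  have hk_le_r : ∀ k : Fin n, (k : ℕ) ≤ (r k : ℕ) := fun k => by have := hrc k; omega
  -- entry decomposition
  have entry : ∀ i j : Fin n, C i j = (if (j : ℕ) = (i : ℕ) + 1 then 1 else 0)
      + ∑ k : Fin n, (if r k = i ∧ c k = j then -T k else 0) := by
    intro i j
    by_cases hj : (j : ℕ) = (i : ℕ) + 1
    · rw [hsup i j hj, if_pos hj]
      have hz : ∀ k ∈ Finset.univ, (if r k = i ∧ c k = j then -T k else (0:ℂ)) = 0 := by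
        intro k _
        rw [if_neg]
        rintro ⟨hri, hcj⟩
        have h2 := hrc k
        rw [hri, hcj] at h2
        omega
      rw [Finset.sum_eq_zero hz, add_zero]
    · rw [if_neg hj, zero_add]
      by_cases hex : ∃ k : Fin n, r k = i ∧ c k = j
      · obtain ⟨k0, hk0⟩ := hex
        have huniq : ∀ k : Fin n, r k = i ∧ c k = j → k = k0 := by
          intro k hk
          have h1 := hrc k; have h2 := hrc k0
          rw [hk.1, hk.2] at h1; rw [hk0.1, hk0.2] at h2
          exact Fin.ext (by omega)
        rw [Finset.sum_eq_single k0]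
        · rw [if_pos hk0, ← hk0.1, ← hk0.2, hval k0]
        · intro k _ hkk
          rw [if_neg (fun hk => hkk (huniq k hk))]
        · intro hc; exact absurd (Finset.mem_univ _) hc
      · push_neg at hex
        rw [hzero i j hj (fun k => by
          rintro ⟨h1, h2⟩; exact (hex k h1) h2)]
        refine (Finset.sum_eq_zero fun k _ => ?_).symm
        rw [if_neg (fun hk => (hex k hk.1) hk.2)]
  -- row sum formula
  have rowsum : ∀ (v : Fin n → ℂ) (i : Fin n), (∑ j, C i j * v j)
      = (∑ j : Fin n, if (j : ℕ) = (i : ℕ) + 1 then v j else 0)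
      + ∑ k : Fin n, (if r k = i then -T k * v (c k) else 0) := by
    intro v i
    have : ∀ j : Fin n, C i j * v j
        = (if (j : ℕ) = (i : ℕ) + 1 then v j else 0)
          + ∑ k : Fin n, (if r k = i ∧ c k = j then -T k * v j else 0) := by
      intro j
      rw [entry i j, add_mul, Finset.sum_mul]
      congr 1
      · split <;> simp
      · refine Finset.sum_congr rfl fun k _ => ?_
        split <;> simp
    rw [Finset.sum_congr rfl (fun j _ => this j), Finset.sum_add_distrib]
    congr 1
    rw [Finset.sum_comm]
    refine Finset.sum_congr rfl fun k _ => ?_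
    by_cases hk : r k = i
    · simp [hk, Finset.sum_ite_eq]
    · simp only [hk, false_and, if_false, if_neg hk]
      exact Finset.sum_eq_zero fun j _ => rfl
  -- column sum formula
  have colsum : ∀ (w : Fin n → ℂ) (j : Fin n), (∑ i, w i * C i j)
      = (∑ i : Fin n, if (i : ℕ) = (j : ℕ) - 1 ∧ 1 ≤ (j : ℕ) then w i else 0)
      + ∑ k : Fin n, (if c k = j then -T k * w (r k) else 0) := by
    intro w j
    have : ∀ i : Fin n, w i * C i j
        = (if (i : ℕ) = (j : ℕ) - 1 ∧ 1 ≤ (j : ℕ) then w i else 0)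
          + ∑ k : Fin n, (if r k = i ∧ c k = j then -T k * w i else 0) := by
      intro i
      rw [entry i j, mul_add, Finset.mul_sum]
      congr 1
      · by_cases hij : (j : ℕ) = (i : ℕ) + 1
        · rw [if_pos hij, if_pos ⟨by omega, by omega⟩, mul_one]
        · rw [if_neg hij, if_neg (by omega), mul_zero]
      · refine Finset.sum_congr rfl fun k _ => ?_
        split <;> simp [mul_comm]
    rw [Finset.sum_congr rfl (fun i _ => this i), Finset.sum_add_distrib]
    congr 1
    rw [Finset.sum_comm]
    refine Finset.sum_congr rfl fun k _ => ?_
    by_cases hk : c k = j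
    · simp [hk, Finset.sum_ite_eq]
    · simp only [hk, and_false, if_false, if_neg hk]
      exact Finset.sum_eq_zero fun i _ => rfl
  -- the right eigenvector
  set v : Fin n → ℂ := fun i => lam ^ (i : ℕ)
      + ∑ k : Fin n, (if (r k : ℕ) < (i : ℕ) then T k * lam ^ ((i : ℕ) - 1 - (k : ℕ)) else 0)
    with hv
  have hv_low : ∀ j : Fin n, (j : ℕ) ≤ m → v j = lam ^ (j : ℕ) := by
    intro j hj
    rw [hv]
    simp only
    rw [Finset.sum_eq_zero, add_zero]
    intro k _
    rw [if_neg]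
    have := hmr k
    omega
  have hv0 : v ≠ 0 := by
    intro h0
    have h1 : v ⟨0, by omega⟩ = 0 := congrFun h0 _
    rw [hv_low ⟨0, by omega⟩ (by simp)] at h1
    simp at h1
  have heig : ∀ i, ∑ j, C i j * v j = lam * v i := by
    intro i
    rw [rowsum v i, sum_ite_coe_eq]
    have hstep : (∑ k : Fin n, (if r k = i then -T k * v (c k) else 0))
        = - ∑ k : Fin n, (if r k = i then T k * lam ^ ((c k : ℕ)) else 0) := by
      rw [← Finset.sum_neg_distrib]
      refine Finset.sum_congr rfl fun k _ => ?_
      by_cases hk : r k = i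
      · rw [if_pos hk, if_pos hk, hv_low (c k) (hcm k)]; ring
      · rw [if_neg hk, if_neg hk, neg_zero]
    rw [hstep]
    have key : lam * v i + (∑ k : Fin n, (if r k = i then T k * lam ^ ((c k : ℕ)) else 0))
        = lam ^ ((i : ℕ) + 1)
          + ∑ k : Fin n, (if (r k : ℕ) ≤ (i : ℕ) then T k * lam ^ ((i : ℕ) - (k : ℕ)) else 0) := by
      rw [hv]
      simp only
      rw [mul_add, Finset.mul_sum, ← pow_succ', add_assoc, ← Finset.sum_add_distrib]
      congr 1
      refine Finset.sum_congr rfl fun k _ => ?_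
      rcases lt_trichotomy ((r k : ℕ)) ((i : ℕ)) with h1 | h1 | h1
      · have hk : r k ≠ i := fun hc => by rw [hc] at h1; omega
        rw [if_pos h1, if_neg hk, if_pos (le_of_lt h1), add_zero]
        have hki : (k : ℕ) < (i : ℕ) := lt_of_le_of_lt (hk_le_r k) h1
        rw [show (i : ℕ) - (k : ℕ) = ((i : ℕ) - 1 - (k : ℕ)) + 1 from by omega, pow_succ]
        ring
      · have hk : r k = i := Fin.ext h1
        have hck : (c k : ℕ) = (i : ℕ) - (k : ℕ) := by have := hrc k; omega
        rw [if_neg (by omega), if_pos hk, if_pos (le_of_eq h1), hck]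
        ring
      · have hk : r k ≠ i := fun hc => by rw [hc] at h1; omega
        rw [if_neg (by omega), if_neg hk, if_neg (by omega)]
        ring
    by_cases hlt : (i : ℕ) + 1 < n
    · rw [dif_pos hlt]
      have hvi1 : v ⟨(i : ℕ) + 1, hlt⟩ = lam ^ ((i : ℕ) + 1)
          + ∑ k : Fin n, (if (r k : ℕ) ≤ (i : ℕ) then T k * lam ^ ((i : ℕ) - (k : ℕ)) else 0) := by
        rw [hv]
        simp only
        congr 1
        refine Finset.sum_congr rfl fun k _ => ?_
        by_cases hk : (r k : ℕ) ≤ (i : ℕ)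
        · rw [if_pos (by omega), if_pos hk,
            show (i : ℕ) + 1 - 1 - (k : ℕ) = (i : ℕ) - (k : ℕ) from by omega]
        · rw [if_neg (by omega), if_neg hk]
      linear_combination hvi1 - key
    · rw [dif_neg hlt]
      have hin : (i : ℕ) = n - 1 := by have := i.isLt; omega
      have hall : (lam ^ ((i : ℕ) + 1)
          + ∑ k : Fin n, (if (r k : ℕ) ≤ (i : ℕ) then T k * lam ^ ((i : ℕ) - (k : ℕ)) else 0))
          = (pPoly n a).eval lam := by
        rw [pPoly_eval_fin']
        congr 1
        · congr 1; omega
        · refine Finset.sum_congr rfl fun k _ => ?_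
          rw [if_pos (by have := (r k).isLt; omega), hT]
          simp only
          congr 2
          omega
      rw [hroot] at hall
      linear_combination -key - hall
  -- the left eigenvector
  set w : Fin n → ℂ := fun j => lam ^ (n - 1 - (j : ℕ))
      + ∑ k : Fin n, (if (j : ℕ) < (c k : ℕ) then T k * lam ^ (n - 2 - (k : ℕ) - (j : ℕ)) else 0)
    with hw
  have hw_high : ∀ i : Fin n, m ≤ (i : ℕ) → w i = lam ^ (n - 1 - (i : ℕ)) := by
    intro i hi
    rw [hw]
    simp only
    rw [Finset.sum_eq_zero, add_zero]
    intro k _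
    rw [if_neg]
    have := hcm k
    omega
  have hw0 : w ≠ 0 := by
    intro h0
    have h1 : w ⟨n - 1, by omega⟩ = 0 := congrFun h0 _
    rw [hw_high ⟨n - 1, by omega⟩ (by simp; omega)] at h1
    simp at h1
  have heigw : ∀ j, ∑ i, w i * C i j = lam * w j := by
    intro j
    rw [colsum w j]
    have hsup2 : (∑ i : Fin n, if (i : ℕ) = (j : ℕ) - 1 ∧ 1 ≤ (j : ℕ) then w i else 0)
        = if h : 1 ≤ (j : ℕ) then w ⟨(j : ℕ) - 1, by have := j.isLt; omega⟩ else 0 := by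
      split
      · next h =>
        rw [Finset.sum_eq_single (⟨(j : ℕ) - 1, by have := j.isLt; omega⟩ : Fin n)]
        · rw [if_pos ⟨rfl, h⟩]
        · intro i _ hi
          rw [if_neg]
          rintro ⟨h1, -⟩
          exact hi (Fin.ext h1)
        · intro hc; exact absurd (Finset.mem_univ _) hc
      · next h =>
        refine Finset.sum_eq_zero fun i _ => ?_
        rw [if_neg (by tauto)]
    rw [hsup2]
    have hstep : (∑ k : Fin n, (if c k = j then -T k * w (r k) else 0))
        = - ∑ k : Fin n, (if c k = j then T k * lam ^ (n - 1 - (r k : ℕ)) else 0) := by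
      rw [← Finset.sum_neg_distrib]
      refine Finset.sum_congr rfl fun k _ => ?_
      by_cases hk : c k = j
      · rw [if_pos hk, if_pos hk, hw_high (r k) (hmr k)]; ring
      · rw [if_neg hk, if_neg hk, neg_zero]
    rw [hstep]
    have key : lam * w j + (∑ k : Fin n, (if c k = j then T k * lam ^ (n - 1 - (r k : ℕ)) else 0))
        = lam ^ (n - (j : ℕ))
          + ∑ k : Fin n, (if (j : ℕ) ≤ (c k : ℕ) then T k * lam ^ (n - 1 - (k : ℕ) - (j : ℕ)) else 0) := by
      rw [hw]
      simp only
      rw [mul_add, Finset.mul_sum, add_assoc, ← Finset.sum_add_distrib]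
      congr 1
      · rw [← pow_succ']
        congr 1
        have := j.isLt
        omega
      refine Finset.sum_congr rfl fun k _ => ?_
      have hrk := hrc k
      have hrlt := (r k).isLt
      rcases lt_trichotomy ((j : ℕ)) ((c k : ℕ)) with h1 | h1 | h1
      · have hk : c k ≠ j := fun hc => by rw [hc] at h1; omega
        rw [if_pos h1, if_neg hk, if_pos (le_of_lt h1), add_zero]
        rw [show n - 1 - (k : ℕ) - (j : ℕ) = (n - 2 - (k : ℕ) - (j : ℕ)) + 1 from by omega,
          pow_succ]
        ring
      · have hk : c k = j := Fin.ext h1.symm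
        rw [if_neg (by omega), if_pos hk, if_pos (le_of_eq h1),
          show n - 1 - (r k : ℕ) = n - 1 - (k : ℕ) - (j : ℕ) from by omega]
        ring
      · have hk : c k ≠ j := fun hc => by rw [hc] at h1; omega
        rw [if_neg (by omega), if_neg hk, if_neg (by omega)]
        ring
    by_cases hge : 1 ≤ (j : ℕ)
    · rw [dif_pos hge]
      have hwj1 : w ⟨(j : ℕ) - 1, by have := j.isLt; omega⟩
          = lam ^ (n - (j : ℕ))
            + ∑ k : Fin n, (if (j : ℕ) ≤ (c k : ℕ) then T k * lam ^ (n - 1 - (k : ℕ) - (j : ℕ)) else 0) := by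
        rw [hw]
        simp only
        congr 1
        · congr 1; have := j.isLt; omega
        refine Finset.sum_congr rfl fun k _ => ?_
        have hrk := hrc k
        have hrlt := (r k).isLt
        by_cases hk : (j : ℕ) ≤ (c k : ℕ)
        · rw [if_pos (by omega), if_pos hk,
            show n - 2 - (k : ℕ) - ((j : ℕ) - 1) = n - 1 - (k : ℕ) - (j : ℕ) from by omega]
        · rw [if_neg (by omega), if_neg hk]
      linear_combination hwj1 - key
    · rw [dif_neg hge]
      have hj0 : (j : ℕ) = 0 := by omega
      have hall : (lam ^ (n - (j : ℕ))
          + ∑ k : Fin n, (if (j : ℕ) ≤ (c k : ℕ) then T k * lam ^ (n - 1 - (k : ℕ) - (j : ℕ)) else 0))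
          = (pPoly n a).eval lam := by
        rw [pPoly_eval_fin']
        congr 1
        · congr 1; omega
        · refine Finset.sum_congr rfl fun k _ => ?_
          rw [if_pos (by omega), hT]
          simp only
          congr 2
          omega
      rw [hroot] at hall
      linear_combination -key - hall
  exact le_min (eigen_le_infNorm' (by omega) C lam v hv0 heig)
    (eigen_le_oneNorm' (by omega) C lam w hw0 heigw)
/-- if `λ` is a root of `p` then `|λ| ≤ N(C)` for any unit sparse
companion matrix `C` of `p`, and if moreover `a_0 ≠ 0` then `1/N(D) ≤ |λ|` for any
unit sparse companion matrix `D` of the monic reversal polynomial `p♯`. -/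
theorem stmt1 (n : ℕ) (hn : 2 ≤ n) (a : ℕ → ℂ) (lam : ℂ)
    (hroot : (pPoly n a).eval lam = 0) :
    (∀ C : Matrix (Fin n) (Fin n) ℂ, IsUnitSparse n a C → ‖lam‖ ≤ NN C) ∧
    (a 0 ≠ 0 → ∀ D : Matrix (Fin n) (Fin n) ℂ, IsUnitSparse n (asharp n a) D →
      1 / NN D ≤ ‖lam‖) := by
  constructor
  · intro C hC
    exact abs_root_le_NN hn a lam hroot C hC
  · intro ha0 D hD
    have hlam : lam ≠ 0 := by
      intro h0
      rw [h0, pPoly_eval'] at hroot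
      rw [zero_pow (by omega), zero_add] at hroot
      rw [Finset.sum_eq_single 0] at hroot
      · simp at hroot
        exact ha0 hroot
      · intro k _ hk
        rw [zero_pow hk, mul_zero]
      · intro hc
        exact absurd (Finset.mem_range.mpr (by omega)) hc
    -- lam⁻¹ is a root of pPoly n (asharp n a)
    have hmul : a 0 * lam ^ n * (pPoly n (asharp n a)).eval lam⁻¹ = (pPoly n a).eval lam := by
      rw [pPoly_eval', pPoly_eval' n a lam, mul_add]
      have hpow : ∀ k : ℕ, k ≤ n → lam ^ n * lam⁻¹ ^ k = lam ^ (n - k) := by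
        intro k hk
        rw [show n = (n - k) + k from by omega, pow_add, mul_assoc, ← mul_pow,
          mul_inv_cancel₀ hlam, one_pow, mul_one,
          show (n - k) + k - k = n - k from by omega]
      have h1 : a 0 * lam ^ n * lam⁻¹ ^ n = a 0 := by
        rw [mul_assoc, hpow n le_rfl, Nat.sub_self, pow_zero, mul_one]
      rw [h1, Finset.mul_sum]
      have h2 : ∀ k ∈ Finset.range n,
          a 0 * lam ^ n * (asharp n a k * lam⁻¹ ^ k)
            = (if k = 0 then lam ^ n else a (n - k) * lam ^ (n - k)) := by
        intro k hk
        have hk' : k ≤ n := by have := Finset.mem_range.mp hk; omega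
        rcases eq_or_ne k 0 with h | h
        · rw [h, if_pos rfl]
          simp only [asharp, if_pos rfl, ↓reduceIte]
          field_simp
        · rw [if_neg h]
          simp only [asharp, if_neg h]
          rw [show a 0 * lam ^ n * (a (n - k) / a 0 * lam⁻¹ ^ k)
              = (a 0 / a 0) * a (n - k) * (lam ^ n * lam⁻¹ ^ k) from by ring,
            div_self ha0, one_mul, hpow k hk']
      rw [Finset.sum_congr rfl h2]
      obtain ⟨n', rfl⟩ : ∃ n', n = n' + 1 := ⟨n - 1, by omega⟩
      rw [Finset.sum_range_succ' (fun k => if k = 0 then lam ^ (n' + 1) else a (n' + 1 - k) * lam ^ (n' + 1 - k)) n',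
        Finset.sum_range_succ' (fun k => a k * lam ^ k) n']
      simp only [if_pos rfl, Nat.succ_ne_zero, if_neg (Nat.succ_ne_zero _), if_true, if_false]
      have h3 : (∑ k ∈ Finset.range n', a (n' + 1 - (k + 1)) * lam ^ (n' + 1 - (k + 1)))
          = ∑ k ∈ Finset.range n', a (k + 1) * lam ^ (k + 1) := by
        rw [← Finset.sum_range_reflect (fun k => a (k + 1) * lam ^ (k + 1)) n']
        refine Finset.sum_congr rfl fun k hk => ?_
        have := Finset.mem_range.mp hk
        congr 2 <;> omega
      rw [h3]
      simp only [pow_zero, mul_one]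
      ring
    rw [hroot] at hmul
    have hsharp : (pPoly n (asharp n a)).eval lam⁻¹ = 0 := by
      have hne : a 0 * lam ^ n ≠ 0 := mul_ne_zero ha0 (pow_ne_zero _ hlam)
      exact (mul_eq_zero.mp hmul).resolve_left hne
    have h1 : ‖lam⁻¹‖ ≤ NN D := abs_root_le_NN hn (asharp n a) lam⁻¹ hsharp D hD
    rw [norm_inv] at h1
    have habs : 0 < ‖lam‖ := norm_pos_iff.mpr hlam
    calc 1 / NN D ≤ 1 / ‖lam‖⁻¹ :=
          one_div_le_one_div_of_le (inv_pos.mpr habs) h1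
      _ = ‖lam‖ := by rw [one_div, inv_inv]

end
end

section
/- Let F be the Frobenius companion matrix of p and let C be a unit sparse companion matrix of p in Hessenberg form. If N(C) < N(F), then |a_0| < 1. -/
noncomputable section

lemma cabs_nonneg (z : ℂ) : 0 ≤ ‖z‖ := norm_nonneg z

lemma pair_le_sum {n : ℕ} (f : Fin n → ℝ) (hf : ∀ i, 0 ≤ f i) {i1 i2 : Fin n}
    (h : i1 ≠ i2) : f i1 + f i2 ≤ ∑ i, f i := by
  rw [← Finset.sum_pair h]
  exact Finset.sum_le_sum_of_subset_of_nonneg (Finset.subset_univ _)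
    (fun i _ _ => hf i)

lemma single_le_sum' {n : ℕ} (f : Fin n → ℝ) (hf : ∀ i, 0 ≤ f i) (i : Fin n) :
    f i ≤ ∑ j, f j :=
  Finset.single_le_sum (fun j _ => hf j) (Finset.mem_univ i)

lemma frob_col_bound {n : ℕ} (hn : 2 ≤ n) (a : ℕ → ℂ) (j : Fin n) :
    (∑ i, ‖Frob n a i j‖) ≤
      if (j : ℕ) = 0 then ‖a 0‖ else 1 + ‖a (j : ℕ)‖ := by
  have hl : n - 1 < n := by omega
  have key : ∀ i : Fin n, ‖Frob n a i j‖ ≤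
      (if (j : ℕ) = (i : ℕ) + 1 then (1:ℝ) else 0)
        + (if (i : ℕ) = n - 1 then ‖a (j : ℕ)‖ else 0) := by
    intro i
    simp only [Frob, Matrix.of_apply]
    split_ifs <;>
      simp [map_neg, cabs_nonneg, le_add_of_nonneg_right, le_add_of_nonneg_left]
  have e2 : (∑ i : Fin n, (if (i : ℕ) = n - 1 then ‖a (j : ℕ)‖ else 0))
      = ‖a (j : ℕ)‖ := by
    rw [Fin.sum_univ_eq_sum_range (fun i => if i = n - 1 then ‖a (j : ℕ)‖ else 0)]
    rw [Finset.sum_ite_eq' (Finset.range n) (n - 1) (fun _ => ‖a (j : ℕ)‖)]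
    rw [if_pos (Finset.mem_range.mpr hl)]
  have hstep : (∑ i, ‖Frob n a i j‖) ≤
      (∑ i : Fin n, (if (j : ℕ) = (i : ℕ) + 1 then (1:ℝ) else 0))
        + (∑ i : Fin n, (if (i : ℕ) = n - 1 then ‖a (j : ℕ)‖ else 0)) := by
    rw [← Finset.sum_add_distrib]
    exact Finset.sum_le_sum (fun i _ => key i)
  by_cases hj : (j : ℕ) = 0
  · rw [if_pos hj]
    have e1 : (∑ i : Fin n, (if (j : ℕ) = (i : ℕ) + 1 then (1:ℝ) else 0)) = 0 :=
      Finset.sum_eq_zero (fun i _ => if_neg (by omega))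
    rw [e1, e2, hj] at hstep
    linarith
  · rw [if_neg hj]
    have e1 : (∑ i : Fin n, (if (j : ℕ) = (i : ℕ) + 1 then (1:ℝ) else 0)) = 1 := by
      rw [Fin.sum_univ_eq_sum_range (fun i => if (j : ℕ) = i + 1 then (1:ℝ) else 0)]
      rw [Finset.sum_congr rfl (fun i _ => if_congr
        (show ((j : ℕ) = i + 1) ↔ (i = (j : ℕ) - 1) by omega) rfl rfl)]
      rw [Finset.sum_ite_eq' (Finset.range n) ((j : ℕ) - 1) (fun _ => (1:ℝ))]
      rw [if_pos (Finset.mem_range.mpr (by have := j.isLt; omega))]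
    rw [e1, e2] at hstep
    linarith

/-- if `N(C) < N(F)` for a unit sparse companion matrix `C` of `p`,
then `|a_0| < 1`. -/
theorem stmt2 (n : ℕ) (hn : 2 ≤ n) (a : ℕ → ℂ) (C : Matrix (Fin n) (Fin n) ℂ)
    (hC : IsUnitSparse n a C) (hlt : NN C < NN (Frob n a)) :
    ‖a 0‖ < 1 := by
  by_contra hcon
  push_neg at hcon
  obtain ⟨m, r, c, hmn, hrc, hmr, hcm, hval, hsup, hzero⟩ := hC
  haveI : Nonempty (Fin n) := ⟨⟨0, by omega⟩⟩
  set t := NN (Frob n a) with ht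
  have hl : n - 1 < n := by omega
  set kl : Fin n := ⟨n - 1, hl⟩ with hkl
  have hrckl := hrc kl
  have hklv : (kl : ℕ) = n - 1 := rfl
  have hrkl : (r kl : ℕ) = n - 1 := by
    have := (r kl).isLt; omega
  have hckl : (c kl : ℕ) = 0 := by omega
  have hCl : C (r kl) (c kl) = -a 0 := by
    have h := hval kl
    rwa [hklv, Nat.sub_self] at h
  -- pick column attaining oneNorm of F
  obtain ⟨j0, hj0⟩ := Finite.exists_max (fun j => ∑ i, ‖Frob n a i j‖)
  have htF : t ≤ ∑ i, ‖Frob n a i j0‖ :=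
    le_trans (min_le_right _ _) (ciSup_le hj0)
  have hbound := frob_col_bound hn a j0
  have hCmin : infNorm C < t ∨ oneNorm C < t := min_lt_iff.mp hlt
  -- the coefficient a j0 sits at position (r ks, c ks) with ks = n-1-j0, when j0 ≥ 1
  rcases hCmin with hinf | hone
  · -- every row sum of C is < t
    have hrow : ∀ i : Fin n, (∑ j, ‖C i j‖) < t := fun i =>
      lt_of_le_of_lt (le_ciSup (f := fun i => ∑ j, ‖C i j‖)
        ((Set.finite_range _).bddAbove) i) hinf
    by_cases hj : (j0 : ℕ) = 0
    · rw [if_pos hj] at hbound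
      have h1 : ‖a 0‖ ≤ ∑ j, ‖C (r kl) j‖ := by
        have := single_le_sum' (fun j => ‖C (r kl) j‖)
          (fun j => cabs_nonneg _) (c kl)
        rwa [hCl, norm_neg] at this
      have := hrow (r kl)
      linarith [htF]
    · rw [if_neg hj] at hbound
      have hj0lt : (j0 : ℕ) < n := j0.isLt
      have hksl : n - 1 - (j0 : ℕ) < n := by omega
      set ks : Fin n := ⟨n - 1 - (j0 : ℕ), hksl⟩ with hks
      have hksv : (ks : ℕ) = n - 1 - (j0 : ℕ) := rfl
      have hvk : C (r ks) (c ks) = -a (j0 : ℕ) := by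
        have h := hval ks
        rw [hksv] at h
        have : n - 1 - (n - 1 - (j0 : ℕ)) = (j0 : ℕ) := by omega
        rwa [this] at h
      have hrcks := hrc ks
      rw [hksv] at hrcks
      by_cases hi : (r ks : ℕ) = n - 1
      · -- a j0 and a 0 are in the same row
        have hreq : r kl = r ks := Fin.ext (by rw [hrkl, hi])
        have hne : c ks ≠ c kl := by
          intro hEq
          have := congrArg Fin.val hEq
          omega
        have hp := pair_le_sum (fun j => ‖C (r ks) j‖)
          (fun j => cabs_nonneg _) hne
        rw [hvk, ← hreq, hCl, norm_neg, norm_neg] at hp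
        have := hrow (r kl)
        linarith
      · -- superdiagonal 1 in the same row
        have hi2 : (r ks : ℕ) + 1 < n := by
          have := (r ks).isLt; omega
        set j1 : Fin n := ⟨(r ks : ℕ) + 1, hi2⟩ with hj1
        have hs1 : C (r ks) j1 = 1 := hsup _ _ rfl
        have hne : c ks ≠ j1 := by
          intro hEq
          have := congrArg Fin.val hEq
          simp [hj1] at this
          omega
        have hp := pair_le_sum (fun j => ‖C (r ks) j‖)
          (fun j => cabs_nonneg _) hne
        rw [hvk, hs1, norm_neg, norm_one] at hp
        have := hrow (r ks)
        linarith
  · -- every column sum of C is < t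
    have hcol : ∀ j : Fin n, (∑ i, ‖C i j‖) < t := fun j =>
      lt_of_le_of_lt (le_ciSup (f := fun j => ∑ i, ‖C i j‖)
        ((Set.finite_range _).bddAbove) j) hone
    by_cases hj : (j0 : ℕ) = 0
    · rw [if_pos hj] at hbound
      have h1 : ‖a 0‖ ≤ ∑ i, ‖C i (c kl)‖ := by
        have := single_le_sum' (fun i => ‖C i (c kl)‖)
          (fun i => cabs_nonneg _) (r kl)
        rwa [hCl, norm_neg] at this
      have := hcol (c kl)
      linarith [htF]
    · rw [if_neg hj] at hbound
      have hj0lt : (j0 : ℕ) < n := j0.isLt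
      have hksl : n - 1 - (j0 : ℕ) < n := by omega
      set ks : Fin n := ⟨n - 1 - (j0 : ℕ), hksl⟩ with hks
      have hksv : (ks : ℕ) = n - 1 - (j0 : ℕ) := rfl
      have hvk : C (r ks) (c ks) = -a (j0 : ℕ) := by
        have h := hval ks
        rw [hksv] at h
        have : n - 1 - (n - 1 - (j0 : ℕ)) = (j0 : ℕ) := by omega
        rwa [this] at h
      have hrcks := hrc ks
      rw [hksv] at hrcks
      by_cases hcz : (c ks : ℕ) = 0
      · -- a j0 and a 0 are in the same column
        have hceq : c kl = c ks := Fin.ext (by rw [hckl, hcz])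
        have hne : r ks ≠ r kl := by
          intro hEq
          have := congrArg Fin.val hEq
          omega
        have hp := pair_le_sum (fun i => ‖C i (c ks)‖)
          (fun i => cabs_nonneg _) hne
        rw [hceq] at hCl
        rw [hvk, hCl, norm_neg, norm_neg] at hp
        have := hcol (c ks)
        linarith
      · -- superdiagonal 1 in the same column
        have hi2 : (c ks : ℕ) - 1 < n := by
          have := (c ks).isLt; omega
        set i1 : Fin n := ⟨(c ks : ℕ) - 1, hi2⟩ with hi1
        have hs1 : C i1 (c ks) = 1 := hsup _ _ (by simp [hi1]; omega)
        have hne : r ks ≠ i1 := by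
          intro hEq
          have := congrArg Fin.val hEq
          simp [hi1] at this
          omega
        have hp := pair_le_sum (fun i => ‖C i (c ks)‖)
          (fun i => cabs_nonneg _) hne
        rw [hvk, hs1, norm_neg, norm_one] at hp
        have := hcol (c ks)
        linarith


end
end

section
/- Let F be the Frobenius companion matrix of p, let C be a unit sparse companion matrix of p in Hessenberg form with coefficient positions (r_k, c_k) (so that −a_{n−1−k} occupies position (r_k, c_k)), and let M = max{|a_k| : 1 ≤ k ≤ n−1}. If N(C) < N(F), then either (1) for every i ∈ {1, …, n−1} with |a_i| = M the coefficient −a_i lies in the n-th row of C (that is, r_{n−1−i} = n), and ‖C‖_∞ < N(F) ≤ ‖C‖_1; or (2) for every i ∈ {1, …, n−1} with |a_i| = M the coefficient −a_i lies in the first column of C (that is, c_{n−1−i} = 1), and ‖C‖_1 < N(F) ≤ ‖C‖_∞. -/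
noncomputable section

lemma sum_pair_le' {n : ℕ} (f : Fin n → ℝ) (hf : ∀ x, 0 ≤ f x) {j j' : Fin n} (h : j ≠ j') :
    f j + f j' ≤ ∑ x, f x := by
  have hs := Finset.sum_le_sum_of_subset_of_nonneg (Finset.subset_univ ({j, j'} : Finset (Fin n)))
    (fun x _ _ => hf x)
  rwa [Finset.sum_pair h] at hs

lemma rowsum_le_infNorm {n : ℕ} [Nonempty (Fin n)] (A : Matrix (Fin n) (Fin n) ℂ) (i : Fin n) :
    ∑ j, ‖A i j‖ ≤ infNorm A := by
  have h : BddAbove (Set.range fun i => ∑ j, ‖A i j‖) :=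
    Set.Finite.bddAbove (Set.finite_range _)
  exact le_ciSup h i

lemma colsum_le_oneNorm {n : ℕ} [Nonempty (Fin n)] (A : Matrix (Fin n) (Fin n) ℂ) (j : Fin n) :
    ∑ i, ‖A i j‖ ≤ oneNorm A := by
  have h : BddAbove (Set.range fun j => ∑ i, ‖A i j‖) :=
    Set.Finite.bddAbove (Set.finite_range _)
  exact le_ciSup h j

set_option maxHeartbeats 1600000 in
/-- if `N(C) < N(F)` then either all coefficients of maximal modulus
`M` (among `a_1, …, a_{n-1}`) lie in the last row of `C` and
`‖C‖_∞ < N(F) ≤ ‖C‖_1`, or they all lie in the first column and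
`‖C‖_1 < N(F) ≤ ‖C‖_∞`.  (The coefficient `-a_i` sits at position index
`k = n-1-i`.) -/
theorem stmt3 (n m : ℕ) (hn : 2 ≤ n) (a : ℕ → ℂ) (C : Matrix (Fin n) (Fin n) ℂ)
    (r c : Fin n → Fin n) (hC : IsUnitSparseData n m a C r c)
    (M : ℝ) (hM : IsGreatest ((fun k => ‖a k‖) '' (Set.Icc 1 (n - 1))) M)
    (hlt : NN C < NN (Frob n a)) :
    ((∀ i : ℕ, 1 ≤ i → i ≤ n - 1 → ‖a i‖ = M →
        ∀ k : Fin n, (k : ℕ) = n - 1 - i → (r k : ℕ) = n - 1) ∧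
      infNorm C < NN (Frob n a) ∧ NN (Frob n a) ≤ oneNorm C) ∨
    ((∀ i : ℕ, 1 ≤ i → i ≤ n - 1 → ‖a i‖ = M →
        ∀ k : Fin n, (k : ℕ) = n - 1 - i → (c k : ℕ) = 0) ∧
      oneNorm C < NN (Frob n a) ∧ NN (Frob n a) ≤ infNorm C) := by
  obtain ⟨hmn, hrc, hmr, hcm, hcoef, hsup, hzero⟩ := hC
  have hne : Nonempty (Fin n) := ⟨⟨0, by omega⟩⟩
  obtain ⟨i0, hi0mem, hi0⟩ := hM.1
  rw [Set.mem_Icc] at hi0mem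
  obtain ⟨hi01, hi0n⟩ := hi0mem
  have hi0' : ‖a i0‖ = M := hi0
  have hMub : ∀ j : ℕ, 1 ≤ j → j ≤ n - 1 → ‖a j‖ ≤ M := by
    intro j h1 h2
    exact hM.2 ⟨j, Set.mem_Icc.mpr ⟨h1, h2⟩, rfl⟩
  -- |a 0| lies at position klast
  set klast : Fin n := ⟨n - 1, by omega⟩ with hklast
  have hClast : C (r klast) (c klast) = -a 0 := by
    have h := hcoef klast
    rwa [show n - 1 - ((klast : Fin n) : ℕ) = 0 from by simp [hklast]] at h
  have ha0_inf : ‖a 0‖ ≤ infNorm C := by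
    calc ‖a 0‖ = ‖C (r klast) (c klast)‖ := by
          rw [hClast, norm_neg]
      _ ≤ ∑ j, ‖C (r klast) j‖ :=
          Finset.single_le_sum (f := fun j => ‖C (r klast) j‖)
            (fun x _ => norm_nonneg _) (Finset.mem_univ _)
      _ ≤ infNorm C := rowsum_le_infNorm C _
  have ha0_one : ‖a 0‖ ≤ oneNorm C := by
    calc ‖a 0‖ = ‖C (r klast) (c klast)‖ := by
          rw [hClast, norm_neg]
      _ ≤ ∑ i, ‖C i (c klast)‖ :=
          Finset.single_le_sum (f := fun i => ‖C i (c klast)‖)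
            (fun x _ => norm_nonneg _) (Finset.mem_univ _)
      _ ≤ oneNorm C := colsum_le_oneNorm C _
  -- row bound
  have hrow : ∀ k : Fin n, (r k : ℕ) ≤ n - 2 →
      1 + ‖a (n - 1 - (k : ℕ))‖ ≤ infNorm C := by
    intro k hk
    set j1 : Fin n := ⟨(r k : ℕ) + 1, by omega⟩ with hj1
    have h1 : C (r k) j1 = 1 := hsup _ _ rfl
    have hne' : j1 ≠ c k := by
      intro h
      have h2 := hrc k
      have h3 : (j1 : ℕ) = (c k : ℕ) := by rw [h]
      simp only [hj1] at h3
      omega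
    have hle := sum_pair_le' (fun j => ‖C (r k) j‖)
      (fun x => norm_nonneg _) hne'
    simp only [h1, hcoef k, norm_one, norm_neg] at hle
    exact le_trans hle (rowsum_le_infNorm C _)
  -- column bound
  have hcol : ∀ k : Fin n, 1 ≤ (c k : ℕ) →
      1 + ‖a (n - 1 - (k : ℕ))‖ ≤ oneNorm C := by
    intro k hk
    set i1 : Fin n := ⟨(c k : ℕ) - 1, by omega⟩ with hi1
    have h1 : C i1 (c k) = 1 := hsup _ _ (by simp [hi1]; omega)
    have hne' : i1 ≠ r k := by
      intro h
      have h2 := hrc k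
      have h3 : (i1 : ℕ) = (r k : ℕ) := by rw [h]
      simp only [hi1] at h3
      omega
    have hle := sum_pair_le' (fun i => ‖C i (c k)‖)
      (fun x => norm_nonneg _) hne'
    simp only [h1, hcoef k, norm_one, norm_neg] at hle
    exact le_trans hle (colsum_le_oneNorm C _)
  -- bound on N(F)
  have hNF : NN (Frob n a) ≤ max (‖a 0‖) (1 + M) := by
    refine le_trans (min_le_right _ _) (ciSup_le fun j => ?_)
    by_cases hj : (j : ℕ) = 0
    · rw [Finset.sum_eq_single (⟨n - 1, by omega⟩ : Fin n)]
      · have : Frob n a (⟨n - 1, by omega⟩ : Fin n) j = -a 0 := by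
          have hc1 : ¬ ((j : ℕ) = n - 1 + 1) := by omega
          simp [Frob, Matrix.of_apply, hc1, hj]
        rw [this, norm_neg]
        exact le_max_left _ _
      · intro b _ hb
        have hbv : (b : ℕ) ≠ n - 1 := fun h => hb (Fin.ext h)
        have : Frob n a b j = 0 := by
          have hc1 : ¬ ((j : ℕ) = (b : ℕ) + 1) := by omega
          simp [Frob, Matrix.of_apply, hc1, hbv]
        rw [this, norm_zero]
      · intro h; exact absurd (Finset.mem_univ _) h
    · have hj1 : 1 ≤ (j : ℕ) := by omega
      have hjn : (j : ℕ) ≤ n - 1 := by have := j.isLt; omega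
      set i1 : Fin n := ⟨(j : ℕ) - 1, by omega⟩ with hi1d
      set i2 : Fin n := ⟨n - 1, by omega⟩ with hi2d
      have hne12 : i1 ≠ i2 := by
        intro h
        have : (i1 : ℕ) = (i2 : ℕ) := by rw [h]
        simp only [hi1d, hi2d] at this
        omega
      have hsum : ∑ i, ‖Frob n a i j‖
          = ‖Frob n a i1 j‖ + ‖Frob n a i2 j‖ := by
        have h2 : ∑ x ∈ ({i1, i2} : Finset (Fin n)), ‖Frob n a x j‖
            = ∑ i, ‖Frob n a i j‖ := by
          apply Finset.sum_subset (Finset.subset_univ _)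
          intro x _ hx
          simp only [Finset.mem_insert, Finset.mem_singleton, not_or] at hx
          have hx1 : (x : ℕ) ≠ (j : ℕ) - 1 := fun h => hx.1 (Fin.ext h)
          have hx2 : (x : ℕ) ≠ n - 1 := fun h => hx.2 (Fin.ext h)
          have : Frob n a x j = 0 := by
            have hc1 : ¬ ((j : ℕ) = (x : ℕ) + 1) := by omega
            simp [Frob, Matrix.of_apply, hc1, hx2]
          rw [this, norm_zero]
        rw [← h2, Finset.sum_pair hne12]
      have hF1 : Frob n a i1 j = 1 := by
        have hc1 : (j : ℕ) = (i1 : ℕ) + 1 := by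
          have : (i1 : ℕ) = (j : ℕ) - 1 := rfl
          omega
        show (if (j : ℕ) = (i1 : ℕ) + 1 then 1
          else if (i1 : ℕ) = n - 1 then -a (j : ℕ) else 0) = 1
        rw [if_pos hc1]
      have hF2 : Frob n a i2 j = -a (j : ℕ) := by
        have hv2 : (i2 : ℕ) = n - 1 := rfl
        have hc1 : ¬ ((j : ℕ) = (i2 : ℕ) + 1) := by omega
        show (if (j : ℕ) = (i2 : ℕ) + 1 then 1
          else if (i2 : ℕ) = n - 1 then -a (j : ℕ) else 0) = -a (j : ℕ)
        rw [if_neg hc1, if_pos hv2]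
      rw [hsum, hF1, hF2, norm_one, norm_neg]
      exact le_trans (by linarith [hMub (j : ℕ) hj1 hjn]) (le_max_right (‖a 0‖) (1 + M))
  -- endgame
  by_cases hinf : infNorm C < NN (Frob n a)
  · left
    have hclaim : ∀ i : ℕ, 1 ≤ i → i ≤ n - 1 → ‖a i‖ = M →
        ∀ k : Fin n, (k : ℕ) = n - 1 - i → (r k : ℕ) = n - 1 := by
      intro i h1 h2 h3 k hk
      by_contra hr
      have hrle : (r k : ℕ) ≤ n - 2 := by have := (r k).isLt; omega
      have hb := hrow k hrle
      rw [show n - 1 - (k : ℕ) = i from by omega, h3] at hb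
      have : NN (Frob n a) ≤ infNorm C := le_trans hNF (max_le ha0_inf hb)
      linarith
    refine ⟨hclaim, hinf, ?_⟩
    set k0 : Fin n := ⟨n - 1 - i0, by omega⟩ with hk0d
    have hk0v : (k0 : ℕ) = n - 1 - i0 := rfl
    have hrk0 : (r k0 : ℕ) = n - 1 := hclaim i0 hi01 hi0n hi0' k0 hk0v
    have hck0 : 1 ≤ (c k0 : ℕ) := by
      have h2 := hrc k0
      omega
    have h1 := hcol k0 hck0
    rw [show n - 1 - (k0 : ℕ) = i0 from by omega, hi0'] at h1
    exact le_trans hNF (max_le ha0_one h1)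
  · right
    have hone : oneNorm C < NN (Frob n a) := by
      rcases min_lt_iff.mp hlt with h | h
      · exact absurd h hinf
      · exact h
    have hclaim : ∀ i : ℕ, 1 ≤ i → i ≤ n - 1 → ‖a i‖ = M →
        ∀ k : Fin n, (k : ℕ) = n - 1 - i → (c k : ℕ) = 0 := by
      intro i h1 h2 h3 k hk
      by_contra hc
      have hcge : 1 ≤ (c k : ℕ) := by omega
      have hb := hcol k hcge
      rw [show n - 1 - (k : ℕ) = i from by omega, h3] at hb
      have : NN (Frob n a) ≤ oneNorm C := le_trans hNF (max_le ha0_one hb)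
      linarith
    refine ⟨hclaim, hone, ?_⟩
    set k0 : Fin n := ⟨n - 1 - i0, by omega⟩ with hk0d
    have hk0v : (k0 : ℕ) = n - 1 - i0 := rfl
    have hck0 : (c k0 : ℕ) = 0 := hclaim i0 hi01 hi0n hi0' k0 hk0v
    have hrk0 : (r k0 : ℕ) ≤ n - 2 := by
      have h2 := hrc k0
      omega
    have h1 := hrow k0 hrk0
    rw [show n - 1 - (k0 : ℕ) = i0 from by omega, hi0'] at h1
    exact le_trans hNF (max_le ha0_inf h1)

end
end

section
/- Let M = max{|a_k| : 1 ≤ k ≤ n−1} and let u be the number of indices k ∈ {1, …, n−1} with |a_k| = M. If there exists a unit sparse companion matrix C of p in Hessenberg form such that N(C) < N(F), where F is the Frobenius companion matrix of p, then (u−1)·M < 1 − |a_0|. -/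
noncomputable section

lemma rowSum_le_infNorm {n : ℕ} (A : Matrix (Fin n) (Fin n) ℂ) (i : Fin n) :
    ∑ j, ‖A i j‖ ≤ infNorm A := by
  unfold infNorm
  exact le_ciSup (f := fun i => ∑ j, ‖A i j‖)
    (Set.Finite.bddAbove (Set.finite_range _)) i

lemma colSum_le_oneNorm {n : ℕ} (A : Matrix (Fin n) (Fin n) ℂ) (j : Fin n) :
    ∑ i, ‖A i j‖ ≤ oneNorm A := by
  unfold oneNorm
  exact le_ciSup (f := fun j => ∑ i, ‖A i j‖)
    (Set.Finite.bddAbove (Set.finite_range _)) j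

lemma sum_subset_le {n : ℕ} (f : Fin n → ℝ) (hf : ∀ j, 0 ≤ f j) (S : Finset (Fin n)) :
    ∑ j ∈ S, f j ≤ ∑ j, f j :=
  Finset.sum_le_sum_of_subset_of_nonneg (Finset.subset_univ S) (fun i _ _ => hf i)

/-- with `M = max{|a_k| : 1 ≤ k ≤ n-1}` and `u` the number of indices
`k ∈ {1, …, n-1}` with `|a_k| = M`, if some unit sparse companion matrix `C` of `p`
satisfies `N(C) < N(F)`, then `(u-1)·M < 1 - |a_0|`. -/
theorem stmt4 (n : ℕ) (hn : 2 ≤ n) (a : ℕ → ℂ) (M : ℝ)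
    (hM : IsGreatest ((fun k => ‖a k‖) '' (Set.Icc 1 (n - 1))) M)
    (u : ℕ)
    (hu : u = ((Finset.Icc 1 (n - 1)).filter fun k => ‖a k‖ = M).card)
    (hex : ∃ C : Matrix (Fin n) (Fin n) ℂ, IsUnitSparse n a C ∧ NN C < NN (Frob n a)) :
    ((u : ℝ) - 1) * M < 1 - ‖a 0‖ := by
  by_contra hgoal
  push_neg at hgoal
  obtain ⟨C, ⟨m, r, c, hm1, hrc, hmr, hcm, hcoef, hsup, _hz⟩, hlt⟩ := hex
  have hn0 : 0 < n := by omega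
  have hn1 : n - 1 < n := by omega
  haveI : Nonempty (Fin n) := ⟨⟨0, hn0⟩⟩
  set kn : Fin n := ⟨n - 1, hn1⟩ with hkndef
  set z0 : Fin n := ⟨0, hn0⟩ with hz0def
  have hknval : (kn : ℕ) = n - 1 := rfl
  have hz0val : (z0 : ℕ) = 0 := rfl
  obtain ⟨⟨k0, hk0mem, hk0⟩, hMub⟩ := hM
  have hMpos : 0 ≤ M := hk0 ▸ norm_nonneg _
  have hbound : ∀ k : ℕ, 1 ≤ k → k ≤ n - 1 → ‖a k‖ ≤ M :=
    fun k h1 h2 => hMub ⟨k, ⟨h1, h2⟩, rfl⟩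
  set bigset : Finset ℕ := (Finset.Icc 1 (n - 1)).filter (fun k => ‖a k‖ = M)
    with hbsdef
  have hbig : ∀ k ∈ bigset, 1 ≤ k ∧ k ≤ n - 1 ∧ ‖a k‖ = M := by
    intro k hk
    simp only [hbsdef, Finset.mem_filter, Finset.mem_Icc] at hk
    exact ⟨hk.1.1, hk.1.2, hk.2⟩
  have hucard : u = bigset.card := hu
  set e : ℕ → Fin n := fun k => ⟨k % n, Nat.mod_lt _ hn0⟩ with hedef
  have he : ∀ k : ℕ, k ≤ n - 1 → ((e k : ℕ) = k) := by
    intro k hk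
    simp only [hedef]
    exact Nat.mod_eq_of_lt (by omega)
  set R : ℕ → Fin n := fun k => r (e (n - 1 - k)) with hRdef
  set Cc : ℕ → Fin n := fun k => c (e (n - 1 - k)) with hCcdef
  have hRC : ∀ k : ℕ, (R k : ℕ) = (Cc k : ℕ) + (n - 1 - k) := by
    intro k
    have h := hrc (e (n - 1 - k))
    rw [he _ (by omega)] at h
    simp only [hRdef, hCcdef]
    exact h
  have hCval : ∀ k : ℕ, k ≤ n - 1 → C (R k) (Cc k) = -a k := by
    intro k hk
    have h := hcoef (e (n - 1 - k))
    rw [he _ (by omega)] at h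
    simp only [hRdef, hCcdef]
    rw [h]
    have hkk : n - 1 - (n - 1 - k) = k := by omega
    rw [hkk]
  have hRub : ∀ k : ℕ, (R k : ℕ) ≤ n - 1 := by
    intro k
    have := (R k).isLt
    omega
  have hCm' : ∀ k : ℕ, (Cc k : ℕ) ≤ m := by
    intro k
    simp only [hCcdef]
    exact hcm _
  have hmR' : ∀ k : ℕ, m ≤ (R k : ℕ) := by
    intro k
    simp only [hRdef]
    exact hmr _
  have hCc0 : Cc 0 = z0 := by
    apply Fin.ext
    have h := hRC 0
    have h2 := hRub 0
    rw [hz0val]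
    omega
  have hR0 : R 0 = kn := by
    apply Fin.ext
    have h := hRC 0
    have h0 := congrArg Fin.val hCc0
    rw [hz0val] at h0
    rw [hknval]
    omega
  have ha0 : C kn z0 = -a 0 := by
    rw [← hCc0, ← hR0]
    exact hCval 0 (by omega)
  have habs : ∀ (i j : Fin n), (0 : ℝ) ≤ ‖C i j‖ := fun i j => norm_nonneg _
  have hinf_a0 : ‖a 0‖ ≤ infNorm C := by
    calc ‖a 0‖ = ‖C kn z0‖ := by rw [ha0, norm_neg]
      _ ≤ ∑ j, ‖C kn j‖ :=
          Finset.single_le_sum (fun j _ => habs kn j) (Finset.mem_univ z0)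
      _ ≤ infNorm C := rowSum_le_infNorm C kn
  have hone_a0 : ‖a 0‖ ≤ oneNorm C := by
    calc ‖a 0‖ = ‖C kn z0‖ := by rw [ha0, norm_neg]
      _ ≤ ∑ i, ‖C i z0‖ :=
          Finset.single_le_sum (fun i _ => habs i z0) (Finset.mem_univ kn)
      _ ≤ oneNorm C := colSum_le_oneNorm C z0
  have key_ineq : 1 + M ≤ ‖a 0‖ + (u : ℝ) * M := by
    have hexp : ((u : ℝ) - 1) * M = (u : ℝ) * M - M := by ring
    rw [hexp] at hgoal
    linarith
  have hMsum : ∀ (f : ℕ → ℝ), (∀ k ∈ bigset, f k = M) → ∑ k ∈ bigset, f k = (u : ℝ) * M := by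
    intro f hf
    rw [Finset.sum_congr rfl hf, Finset.sum_const, hucard, nsmul_eq_mul]
  have hinf_1M : 1 + M ≤ infNorm C := by
    by_cases hc : ∃ k ∈ bigset, (R k : ℕ) + 2 ≤ n
    · obtain ⟨k, hkmem, hRk⟩ := hc
      obtain ⟨hk1, hk2, hkM⟩ := hbig k hkmem
      have hlt2 : (R k : ℕ) + 1 < n := by omega
      have hne : (⟨(R k : ℕ) + 1, hlt2⟩ : Fin n) ≠ Cc k := by
        intro h
        have h' : (R k : ℕ) + 1 = (Cc k : ℕ) := congrArg Fin.val h
        have := hCm' k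
        have := hmR' k
        omega
      have h1 : C (R k) ⟨(R k : ℕ) + 1, hlt2⟩ = 1 := hsup _ _ rfl
      calc (1 : ℝ) + M
          = ‖C (R k) ⟨(R k : ℕ) + 1, hlt2⟩‖ + ‖C (R k) (Cc k)‖ := by
            rw [h1, hCval k hk2, norm_neg, hkM]
            simp
        _ = ∑ j ∈ ({⟨(R k : ℕ) + 1, hlt2⟩, Cc k} : Finset (Fin n)), ‖C (R k) j‖ :=
            (Finset.sum_pair (f := fun j => ‖C (R k) j‖) hne).symm
        _ ≤ ∑ j, ‖C (R k) j‖ := sum_subset_le _ (habs _) _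
        _ ≤ infNorm C := rowSum_le_infNorm C (R k)
    · push_neg at hc
      have hrow : ∀ k ∈ bigset, R k = kn := by
        intro k hk
        have h1 := hc k hk
        have h2 := hRub k
        apply Fin.ext
        rw [hknval]
        omega
      have hcol : ∀ k ∈ bigset, Cc k = e k := by
        intro k hk
        obtain ⟨hk1, hk2, _⟩ := hbig k hk
        have h1 := hRC k
        have h2 := congrArg Fin.val (hrow k hk)
        rw [hknval] at h2
        apply Fin.ext
        rw [he k hk2]
        omega
      have hinj : ∀ x ∈ bigset, ∀ y ∈ bigset, e x = e y → x = y := by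
        intro x hx y hy hxy
        have h := congrArg Fin.val hxy
        rw [he x (hbig x hx).2.1, he y (hbig y hy).2.1] at h
        exact h
      have h0notin : z0 ∉ bigset.image e := by
        simp only [Finset.mem_image, not_exists, not_and]
        intro x hx h
        have h' := congrArg Fin.val h
        rw [he x (hbig x hx).2.1, hz0val] at h'
        have := (hbig x hx).1
        omega
      have hent : ∀ k ∈ bigset, ‖C kn (e k)‖ = M := by
        intro k hk
        rw [← hrow k hk, ← hcol k hk, hCval k (hbig k hk).2.1, norm_neg]
        exact (hbig k hk).2.2
      calc (1 : ℝ) + M ≤ ‖a 0‖ + (u : ℝ) * M := key_ineq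
        _ = ∑ j ∈ insert z0 (bigset.image e), ‖C kn j‖ := by
            rw [Finset.sum_insert h0notin, Finset.sum_image hinj, ha0, norm_neg,
              hMsum _ hent]
        _ ≤ ∑ j, ‖C kn j‖ := sum_subset_le _ (habs _) _
        _ ≤ infNorm C := rowSum_le_infNorm C kn
  have hone_1M : 1 + M ≤ oneNorm C := by
    by_cases hc : ∃ k ∈ bigset, 1 ≤ (Cc k : ℕ)
    · obtain ⟨k, hkmem, hCk⟩ := hc
      obtain ⟨hk1, hk2, hkM⟩ := hbig k hkmem
      have hlt2 : (Cc k : ℕ) - 1 < n := by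
        have := (Cc k).isLt
        omega
      have hne : (⟨(Cc k : ℕ) - 1, hlt2⟩ : Fin n) ≠ R k := by
        intro h
        have h' : (Cc k : ℕ) - 1 = (R k : ℕ) := congrArg Fin.val h
        have := hCm' k
        have := hmR' k
        omega
      have h1 : C ⟨(Cc k : ℕ) - 1, hlt2⟩ (Cc k) = 1 :=
        hsup _ _ (show (Cc k : ℕ) = (Cc k : ℕ) - 1 + 1 by omega)
      calc (1 : ℝ) + M
          = ‖C ⟨(Cc k : ℕ) - 1, hlt2⟩ (Cc k)‖ + ‖C (R k) (Cc k)‖ := by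
            rw [h1, hCval k hk2, norm_neg, hkM]
            simp
        _ = ∑ i ∈ ({⟨(Cc k : ℕ) - 1, hlt2⟩, R k} : Finset (Fin n)), ‖C i (Cc k)‖ :=
            (Finset.sum_pair (f := fun i => ‖C i (Cc k)‖) hne).symm
        _ ≤ ∑ i, ‖C i (Cc k)‖ := sum_subset_le _ (fun i => habs i _) _
        _ ≤ oneNorm C := colSum_le_oneNorm C (Cc k)
    · push_neg at hc
      have hcol : ∀ k ∈ bigset, Cc k = z0 := by
        intro k hk
        have h1 := hc k hk
        apply Fin.ext
        rw [hz0val]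
        omega
      have hrow : ∀ k ∈ bigset, R k = e (n - 1 - k) := by
        intro k hk
        obtain ⟨hk1, hk2, _⟩ := hbig k hk
        have h1 := hRC k
        have h2 := congrArg Fin.val (hcol k hk)
        rw [hz0val] at h2
        apply Fin.ext
        rw [he (n - 1 - k) (by omega)]
        omega
      have hinj : ∀ x ∈ bigset, ∀ y ∈ bigset, e (n - 1 - x) = e (n - 1 - y) → x = y := by
        intro x hx y hy hxy
        have h := congrArg Fin.val hxy
        rw [he _ (by omega), he _ (by omega)] at h
        have := (hbig x hx).2.1
        have := (hbig y hy).2.1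
        omega
      have hknnotin : kn ∉ bigset.image (fun k => e (n - 1 - k)) := by
        simp only [Finset.mem_image, not_exists, not_and]
        intro x hx h
        have h' := congrArg Fin.val h
        rw [he _ (by omega), hknval] at h'
        have := (hbig x hx).1
        have := (hbig x hx).2.1
        omega
      have hent : ∀ k ∈ bigset, ‖C (e (n - 1 - k)) z0‖ = M := by
        intro k hk
        rw [← hrow k hk, ← hcol k hk, hCval k (hbig k hk).2.1, norm_neg]
        exact (hbig k hk).2.2
      calc (1 : ℝ) + M ≤ ‖a 0‖ + (u : ℝ) * M := key_ineq
        _ = ∑ i ∈ insert kn (bigset.image (fun k => e (n - 1 - k))), ‖C i z0‖ := by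
            rw [Finset.sum_insert hknnotin, Finset.sum_image hinj, ha0, norm_neg,
              hMsum _ hent]
        _ ≤ ∑ i, ‖C i z0‖ := sum_subset_le _ (fun i => habs i _) _
        _ ≤ oneNorm C := colSum_le_oneNorm C z0
  have hF : NN (Frob n a) ≤ max (‖a 0‖) (1 + M) := by
    refine le_trans (min_le_right (infNorm (Frob n a)) (oneNorm (Frob n a))) ?_
    refine ciSup_le fun j => ?_
    by_cases hj : (j : ℕ) = 0
    · have hpt : ∀ i : Fin n,
          ‖Frob n a i j‖ = if i = kn then ‖a 0‖ else 0 := by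
        intro i
        simp only [Frob, Matrix.of_apply]
        rw [if_neg (by omega)]
        rcases eq_or_ne i kn with h | h
        · subst h
          rw [if_pos hknval, if_pos rfl, hj, norm_neg]
        · rw [if_neg (fun hh => h (Fin.ext (by rw [hknval]; exact hh))), if_neg h]
          simp
      calc ∑ i, ‖Frob n a i j‖ = ‖a 0‖ := by
            rw [Finset.sum_congr rfl fun i _ => hpt i]
            simp
        _ ≤ max (‖a 0‖) (1 + M) := le_max_left _ _
    · have hjlt : (j : ℕ) - 1 < n := by
        have := j.isLt
        omega
      have hpt : ∀ i : Fin n, ‖Frob n a i j‖ ≤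
          (if i = (⟨(j : ℕ) - 1, hjlt⟩ : Fin n) then (1 : ℝ) else 0) +
          (if i = kn then M else 0) := by
        intro i
        simp only [Frob, Matrix.of_apply]
        by_cases h1 : (j : ℕ) = (i : ℕ) + 1
        · rw [if_pos h1, if_pos (Fin.ext (show (i : ℕ) = (j : ℕ) - 1 by omega))]
          simp only [norm_one]
          split_ifs <;> linarith
        · rw [if_neg h1]
          by_cases h2 : (i : ℕ) = n - 1
          · have h3 : i = kn := Fin.ext (by rw [hknval]; exact h2)
            have h4 : i ≠ (⟨(j : ℕ) - 1, hjlt⟩ : Fin n) := by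
              intro h
              have h' : (i : ℕ) = (j : ℕ) - 1 := congrArg Fin.val h
              have := j.isLt
              omega
            rw [if_pos h2, if_neg h4, if_pos h3, norm_neg]
            have hb := hbound (j : ℕ) (by omega) (by have := j.isLt; omega)
            linarith
          · rw [if_neg h2]
            simp only [norm_zero]
            split_ifs <;> linarith
      calc ∑ i, ‖Frob n a i j‖
          ≤ ∑ i, ((if i = (⟨(j : ℕ) - 1, hjlt⟩ : Fin n) then (1 : ℝ) else 0) +
              (if i = kn then M else 0)) := Finset.sum_le_sum fun i _ => hpt i
        _ = 1 + M := by
            rw [Finset.sum_add_distrib]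
            simp
        _ ≤ max (‖a 0‖) (1 + M) := le_max_right _ _
  have hCN : max (‖a 0‖) (1 + M) ≤ NN C :=
    le_min (max_le hinf_a0 hinf_1M) (max_le hone_a0 hone_1M)
  have hfinal := le_trans hF hCN
  exact absurd hlt (not_lt.mpr hfinal)

end
end

section
/- Let b ∈ {0, 1, …, n−2} and let F_b be any Fiedler companion matrix of p in Hessenberg form in which the coefficient −a_b lies in row n and the coefficient −a_{b+1} lies in row n−1. Then ‖L_b‖_∞ ≤ ‖F_b‖_∞. -/
noncomputable section

/-- if `F_b` is a Fiedler companion matrix of `p` in Hessenberg form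
in which `-a_b` lies in row `n` (position index `n-1-b`) and `-a_{b+1}` lies in row
`n-1` (position index `n-2-b`), then `‖L_b‖_∞ ≤ ‖F_b‖_∞`. -/
theorem stmt6 (n b : ℕ) (hn : 2 ≤ n) (hb : b ≤ n - 2) (a : ℕ → ℂ)
    (Fb : Matrix (Fin n) (Fin n) ℂ) (m : ℕ) (r c : Fin n → Fin n)
    (hF : IsFiedlerData n m a Fb r c)
    (hrow : ∀ k : Fin n, (k : ℕ) = n - 1 - b → (r k : ℕ) = n - 1)
    (hrow' : ∀ k : Fin n, (k : ℕ) = n - 2 - b → (r k : ℕ) = n - 2) :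
    infNorm (Lmat n b a) ≤ infNorm Fb := by
  obtain ⟨⟨hm, hrc, hmr, hcm, hent, hsdiag, hzero⟩, hfied⟩ := hF
  have hne : Nonempty (Fin n) := ⟨⟨0, by omega⟩⟩
  have hbdd : BddAbove (Set.range fun i : Fin n => ∑ j, ‖Fb i j‖) :=
    Set.Finite.bddAbove (Set.finite_range _)
  have hrowle : ∀ i : Fin n, (∑ j, ‖Fb i j‖) ≤ infNorm Fb :=
    fun i => le_ciSup hbdd i
  -- staircase: coefficients a_b, …, a_0 sit in row n-1 of Fb at columns b, …, 0
  have hstair : ∀ t, t ≤ b → ∃ k : Fin n, (k : ℕ) = n - 1 - b + t ∧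
      (r k : ℕ) = n - 1 ∧ (c k : ℕ) = b - t := by
    intro t ht
    induction t with
    | zero =>
      refine ⟨⟨n - 1 - b, by omega⟩, rfl, ?_, ?_⟩
      · exact hrow _ rfl
      · have h1 := hrc ⟨n - 1 - b, by omega⟩
        have h2 := hrow ⟨n - 1 - b, by omega⟩ rfl
        simp only at h1 h2
        omega
    | succ t ih =>
      obtain ⟨k, hk, hrk, hck⟩ := ih (by omega)
      have hlt : (k : ℕ) + 1 < n := by omega
      have hf := hfied k ⟨(k : ℕ) + 1, hlt⟩ rfl
      rcases hf with ⟨h1, h2⟩ | ⟨h1, h2⟩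
      · have := (r ⟨(k : ℕ) + 1, hlt⟩).isLt
        omega
      · refine ⟨⟨(k : ℕ) + 1, hlt⟩, by simp; omega, ?_, ?_⟩
        · have := congrArg Fin.val h1; omega
        · omega
  -- monotonicity: for indices ≤ n-2-b the row is ≤ n-2
  have hmono : ∀ t, ∀ k : Fin n, (k : ℕ) + t = n - 2 - b → (r k : ℕ) ≤ n - 2 := by
    intro t
    induction t with
    | zero => intro k hk; exact le_of_eq (hrow' k (by omega))
    | succ t ih =>
      intro k hk
      have hlt : (k : ℕ) + 1 < n := by omega
      have h2 := ih ⟨(k : ℕ) + 1, hlt⟩ (by simp; omega)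
      rcases hfied k ⟨(k : ℕ) + 1, hlt⟩ rfl with ⟨h1, _⟩ | ⟨h1, _⟩
      · omega
      · have := congrArg Fin.val h1; omega
  rw [infNorm]
  apply ciSup_le
  intro i
  have hilt := i.isLt
  by_cases hA : (i : ℕ) = n - 1
  · -- last row: termwise comparison with row n-1 of Fb
    refine le_trans (Finset.sum_le_sum (fun j _ => ?_)) (hrowle i)
    have hjlt := j.isLt
    by_cases hj : (j : ℕ) ≤ b
    · obtain ⟨k, hk, hrk, hck⟩ := hstair (b - (j : ℕ)) (by omega)
      have hri : r k = i := Fin.ext (by omega)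
      have hcj : c k = j := Fin.ext (by omega)
      have hFe := hent k
      rw [hri, hcj] at hFe
      have hLe : Lmat n b a i j = -a (j : ℕ) := by
        simp only [Lmat, Matrix.of_apply]
        rw [if_neg (by omega), if_pos ⟨hA, hj⟩]
      rw [hLe, hFe]
      have : n - 1 - (k : ℕ) = (j : ℕ) := by omega
      rw [this]
    · have hLe : Lmat n b a i j = 0 := by
        simp only [Lmat, Matrix.of_apply]
        rw [if_neg (by omega), if_neg (by omega), if_neg (by omega)]
      rw [hLe]
      simp [AbsoluteValue.nonneg]
  · have hile : (i : ℕ) ≤ n - 2 := by omega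
    have hsd : ((i : ℕ) + 1) < n := by omega
    by_cases hC : b ≤ (i : ℕ)
    · -- middle rows with a coefficient
      set kv : Fin n := ⟨(i : ℕ) - b, by omega⟩ with hkv
      have hkvval : (kv : ℕ) = (i : ℕ) - b := rfl
      have hrk : (r kv : ℕ) ≤ n - 2 := hmono (n - 2 - (i : ℕ)) kv (by omega)
      have hrlt : (r kv : ℕ) + 1 < n := by omega
      have h1 : Fb (r kv) ⟨(r kv : ℕ) + 1, hrlt⟩ = 1 := hsdiag _ _ rfl
      have h2 : Fb (r kv) (c kv) = -a (n - 1 - (kv : ℕ)) := hent kv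
      have hrckv := hrc kv
      have hcne : c kv ≠ ⟨(r kv : ℕ) + 1, hrlt⟩ := by
        intro h
        have := congrArg Fin.val h
        simp at this
        omega
      -- left row sum
      have hLb : (⟨b, by omega⟩ : Fin n) ≠ (⟨(i : ℕ) + 1, hsd⟩ : Fin n) := by
        intro h; have := congrArg Fin.val h; simp at this; omega
      have hLsum : ∑ j, ‖Lmat n b a i j‖ =
          ‖a (n + b - 1 - (i : ℕ))‖ + 1 := by
        rw [show (∑ j, ‖Lmat n b a i j‖) =
            ∑ j ∈ ({⟨b, by omega⟩, ⟨(i : ℕ) + 1, hsd⟩} : Finset (Fin n)),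
              ‖Lmat n b a i j‖ from
          (Finset.sum_subset (Finset.subset_univ _) (fun j _ hj => by
            simp only [Finset.mem_insert, Finset.mem_singleton] at hj
            push_neg at hj
            have hj1 : (j : ℕ) ≠ b := fun h => hj.1 (Fin.ext h)
            have hj2 : (j : ℕ) ≠ (i : ℕ) + 1 := fun h => hj.2 (Fin.ext h)
            have : Lmat n b a i j = 0 := by
              simp only [Lmat, Matrix.of_apply]
              rw [if_neg (by omega), if_neg (by omega), if_neg (by omega)]
            rw [this]; simp)).symm]
        rw [Finset.sum_pair hLb]
        have hL1 : ∀ j : Fin n, (j : ℕ) = b → Lmat n b a i j = -a (n + b - 1 - (i : ℕ)) := by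
          intro j hj
          simp only [Lmat, Matrix.of_apply]
          rw [if_neg (by omega), if_neg (by omega), if_pos (by omega)]
        have hL2 : ∀ j : Fin n, (j : ℕ) = (i : ℕ) + 1 → Lmat n b a i j = 1 := by
          intro j hj
          simp only [Lmat, Matrix.of_apply]
          rw [if_pos hj]
        rw [hL1 _ rfl, hL2 _ rfl]
        simp
      rw [hLsum]
      refine le_trans ?_ (hrowle (r kv))
      have hsub : ∑ j ∈ ({c kv, ⟨(r kv : ℕ) + 1, hrlt⟩} : Finset (Fin n)),
          ‖Fb (r kv) j‖ ≤ ∑ j, ‖Fb (r kv) j‖ :=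
        Finset.sum_le_sum_of_subset_of_nonneg (Finset.subset_univ _)
          (fun _ _ _ => norm_nonneg _)
      rw [Finset.sum_pair hcne, h1, h2] at hsub
      have hidx : n - 1 - (kv : ℕ) = n + b - 1 - (i : ℕ) := by
        rw [hkvval]; omega
      rw [hidx] at hsub
      simpa using hsub
    · -- rows above the staircase: row sum is 1
      have hLsum : ∑ j, ‖Lmat n b a i j‖ = 1 := by
        rw [show (∑ j, ‖Lmat n b a i j‖) =
            ∑ j ∈ ({⟨(i : ℕ) + 1, hsd⟩} : Finset (Fin n)),
              ‖Lmat n b a i j‖ from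
          (Finset.sum_subset (Finset.subset_univ _) (fun j _ hj => by
            simp only [Finset.mem_singleton] at hj
            have hj2 : (j : ℕ) ≠ (i : ℕ) + 1 := fun h => hj (Fin.ext h)
            have : Lmat n b a i j = 0 := by
              simp only [Lmat, Matrix.of_apply]
              rw [if_neg (by omega), if_neg (by omega), if_neg (by omega)]
            rw [this]; simp)).symm]
        rw [Finset.sum_singleton]
        have hL2 : ∀ j : Fin n, (j : ℕ) = (i : ℕ) + 1 → Lmat n b a i j = 1 := by
          intro j hj
          simp only [Lmat, Matrix.of_apply]
          rw [if_pos hj]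
        rw [hL2 _ rfl]; simp
      rw [hLsum]
      refine le_trans ?_ (hrowle i)
      have h1 : Fb i ⟨(i : ℕ) + 1, hsd⟩ = 1 := hsdiag _ _ rfl
      calc (1:ℝ) = ‖Fb i ⟨(i : ℕ) + 1, hsd⟩‖ := by rw [h1]; simp
        _ ≤ ∑ j, ‖Fb i j‖ :=
          Finset.single_le_sum (f := fun j => ‖Fb i j‖)
            (fun j _ => norm_nonneg _) (Finset.mem_univ _)

end
end

section
/- Let r = max{k ∈ {0, 1, …, n−1} : Σ_{i=0}^{k−1} |a_i| < 1}, where the empty sum for k = 0 is 0 (so r is well defined, and r = 0 when |a_0| ≥ 1). Then ‖L_r‖_∞ ≤ ‖L_b‖_∞ for all b ∈ {0, 1, …, n−2}. -/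
noncomputable section

lemma lmat_rowsum_lt (n b : ℕ) (a : ℕ → ℂ) (i : Fin n) (h : (i : ℕ) < b)
    (hb : b ≤ n - 1) (hn : 2 ≤ n) :
    ∑ j, ‖Lmat n b a i j‖ = 1 := by
  have hi1 : (i : ℕ) + 1 < n := by omega
  rw [Fintype.sum_eq_single (⟨(i : ℕ) + 1, hi1⟩ : Fin n)]
  · simp [Lmat]
  · intro j hj
    have hj' : (j : ℕ) ≠ (i : ℕ) + 1 := fun h' => hj (Fin.ext h')
    have h1 : (i : ℕ) ≠ n - 1 := by omega
    have h2 : ¬ b ≤ (i : ℕ) := by omega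
    simp [Lmat, hj', h1, h2]

lemma lmat_rowsum_mid (n b : ℕ) (a : ℕ → ℂ) (i : Fin n) (h1 : b ≤ (i : ℕ))
    (h2 : (i : ℕ) + 2 ≤ n) :
    ∑ j, ‖Lmat n b a i j‖ = 1 + ‖a (n + b - 1 - (i : ℕ))‖ := by
  have hi1 : (i : ℕ) + 1 < n := by omega
  have hbn : b < n := by omega
  have hne : (⟨(i : ℕ) + 1, hi1⟩ : Fin n) ≠ ⟨b, hbn⟩ := by
    intro h; apply absurd (congrArg Fin.val h); simp; omega
  rw [Fintype.sum_eq_add (⟨(i : ℕ) + 1, hi1⟩ : Fin n) (⟨b, hbn⟩ : Fin n) hne]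
  · have hib : (i : ℕ) ≠ n - 1 := by omega
    have hbi : b ≠ (i : ℕ) + 1 := by omega
    simp [Lmat, hib, hbi, h1, h2]
  · intro j hjab
    obtain ⟨hja, hjb⟩ := hjab
    have hj1 : (j : ℕ) ≠ (i : ℕ) + 1 := fun h' => hja (Fin.ext h')
    have hj2 : (j : ℕ) ≠ b := fun h' => hjb (Fin.ext h')
    have hin : (i : ℕ) ≠ n - 1 := by omega
    simp [Lmat, hj1, hj2, hin]

lemma lmat_rowsum_last (n b : ℕ) (a : ℕ → ℂ) (hn : 2 ≤ n) (hb : b + 1 ≤ n) :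
    ∑ j, ‖Lmat n b a ⟨n - 1, by omega⟩ j‖ =
      ∑ j ∈ Finset.range (b + 1), ‖a j‖ := by
  have step1 : ∑ j, ‖Lmat n b a ⟨n - 1, by omega⟩ j‖ =
      ∑ j : Fin n, (fun t => if t ≤ b then ‖a t‖ else 0) (j : ℕ) := by
    refine Finset.sum_congr rfl fun j _ => ?_
    have hj1 : (j : ℕ) ≠ (n - 1 : ℕ) + 1 := by omega
    have hj2 : ¬ ((n - 1 : ℕ) + 2 ≤ n) := by omega
    by_cases hjb : (j : ℕ) ≤ b
    · simp [Lmat, hj1, hj2, hjb]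
    · simp [Lmat, hj1, hj2, hjb]
  rw [step1, Fin.sum_univ_eq_sum_range (fun t => if t ≤ b then ‖a t‖ else 0) n]
  rw [← Finset.sum_subset (Finset.range_subset_range.mpr hb)]
  · exact Finset.sum_congr rfl fun t ht => by
      rw [if_pos (by simpa [Nat.lt_succ_iff] using Finset.mem_range.mp ht)]
  · intro t _ ht
    have hneg : ¬ t ≤ b := fun h => ht (Finset.mem_range.mpr (by omega))
    rw [if_neg hneg]

/-- with `r = max{k ∈ {0, …, n-1} : Σ_{i<k} |a_i| < 1}`,
`‖L_r‖_∞ ≤ ‖L_b‖_∞` for all `b ∈ {0, …, n-2}`. -/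
theorem stmt7 (n : ℕ) (hn : 2 ≤ n) (a : ℕ → ℂ) (r : ℕ)
    (hr1 : r ≤ n - 1)
    (hr2 : ∑ i ∈ Finset.range r, ‖a i‖ < 1)
    (hr3 : ∀ k : ℕ, k ≤ n - 1 → (∑ i ∈ Finset.range k, ‖a i‖) < 1 → k ≤ r) :
    ∀ b : ℕ, b ≤ n - 2 → infNorm (Lmat n r a) ≤ infNorm (Lmat n b a) := by
  intro b hb
  have hne : Nonempty (Fin n) := ⟨⟨0, by omega⟩⟩
  set S : ℕ → ℝ := fun k => ∑ i ∈ Finset.range k, ‖a i‖ with hS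
  have hSmono : ∀ k l : ℕ, k ≤ l → S k ≤ S l := fun k l hkl =>
    Finset.sum_le_sum_of_subset_of_nonneg (Finset.range_subset_range.mpr hkl)
      (fun i _ _ => norm_nonneg _)
  have hSsucc : ∀ k : ℕ, S (k + 1) = S k + ‖a k‖ := fun k =>
    Finset.sum_range_succ _ k
  have hSge : ∀ k : ℕ, r < k → k ≤ n - 1 → 1 ≤ S k := by
    intro k hk1 hk2
    by_contra h
    exact absurd (hr3 k hk2 (by push_neg at h; linarith)) (by omega)
  have hbound : BddAbove (Set.range fun i : Fin n => ∑ j, ‖Lmat n b a i j‖) :=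
    Set.Finite.bddAbove (Set.finite_range _)
  have hwit : ∀ i' : Fin n, (∑ j, ‖Lmat n b a i' j‖) ≤ infNorm (Lmat n b a) :=
    fun i' => le_ciSup hbound i'
  show (⨆ i, ∑ j, ‖Lmat n r a i j‖) ≤ infNorm (Lmat n b a)
  apply ciSup_le
  intro i
  by_cases h1 : (i : ℕ) < r
  · -- row sum is 1; compare with row b of L_b
    rw [lmat_rowsum_lt n r a i h1 hr1 hn]
    have := hwit ⟨b, by omega⟩
    rw [lmat_rowsum_mid n b a ⟨b, by omega⟩ (le_refl b) (show b + 2 ≤ n by omega)] at this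
    have hnn : (0:ℝ) ≤ ‖a (n + b - 1 - b)‖ := norm_nonneg _
    linarith
  · by_cases h2 : (i : ℕ) + 2 ≤ n
    · -- middle row of L_r
      have hri : r ≤ (i : ℕ) := by omega
      rw [lmat_rowsum_mid n r a i hri h2]
      set k := n + r - 1 - (i : ℕ) with hk
      have hk1 : r + 1 ≤ k := by omega
      have hk2 : k ≤ n - 1 := by omega
      by_cases hkb : b < k
      · have := hwit ⟨n + b - 1 - k, by omega⟩
        rw [lmat_rowsum_mid n b a ⟨n + b - 1 - k, by omega⟩ (show b ≤ n + b - 1 - k by omega)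
          (show (n + b - 1 - k) + 2 ≤ n by omega)] at this
        have heq : n + b - 1 - (n + b - 1 - k) = k := by omega
        rw [heq] at this
        exact this
      · -- k ≤ b : use bottom row of L_b
        have hSk : 1 ≤ S k := hSge k (by omega) (by omega)
        have := hwit ⟨n - 1, by omega⟩
        rw [lmat_rowsum_last n b a hn (by omega)] at this
        have h3 : S (k + 1) ≤ S (b + 1) := hSmono _ _ (by omega)
        have h4 := hSsucc k
        simp only [hS] at hSk this h3 h4 ⊢
        linarith
    · -- i = n - 1
      have hieq : i = ⟨n - 1, by omega⟩ := Fin.ext (by simp; omega)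
      rw [hieq, lmat_rowsum_last n r a hn (by omega)]
      by_cases hrb : r ≤ b
      · have := hwit ⟨n - 1, by omega⟩
        rw [lmat_rowsum_last n b a hn (by omega)] at this
        have h3 : S (r + 1) ≤ S (b + 1) := hSmono _ _ (by omega)
        simp only [hS] at this h3 ⊢
        linarith
      · -- b < r : compare with middle row of L_b holding a r
        have := hwit ⟨n + b - 1 - r, by omega⟩
        rw [lmat_rowsum_mid n b a ⟨n + b - 1 - r, by omega⟩ (show b ≤ n + b - 1 - r by omega)
          (show (n + b - 1 - r) + 2 ≤ n by omega)] at this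
        have heq : n + b - 1 - (n + b - 1 - r) = r := by omega
        rw [heq] at this
        have h4 := hSsucc r
        simp only [hS] at this h4 ⊢
        linarith

end
end
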